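/- arXiv:1404.2463 — 6 statements merged into one kernel-verified Lean document; each statement's English description precedes it below -/
import Mathlib

section
/- Let ρ > 1 and let f be analytic inside and on the Bernstein ellipse E_ρ. Then for every integer n ≥ 0, the n-th Chebyshev coefficient of the first kind of f satisfies a_n = (1/(π ρ^n)) ∫_0^{2π} f(½(ρe^{iθ} + (ρe^{iθ})^{-1})) e^{-inθ} dθ. -/
open Complex Real MeasureTheory Polynomial

noncomputable section

/-- The point ½(u + u⁻¹) for u = r·e^{iθ}. -/
def joukowski (r θ : ℝ) : ℂ :=
  ((r : ℂ) * Complex.exp (θ * Complex.I) +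
    ((r : ℂ) * Complex.exp (θ * Complex.I))⁻¹) / 2

/-- The Bernstein ellipse E_ρ (the curve). -/
def bernsteinEllipse (ρ : ℝ) : Set ℂ := {z | ∃ θ : ℝ, z = joukowski ρ θ}

/-- The closed interior D̄_ρ of the Bernstein ellipse. -/
def bernsteinDisk (ρ : ℝ) : Set ℂ :=
  {z | ∃ r θ : ℝ, 1 ≤ r ∧ r ≤ ρ ∧ z = joukowski r θ}

/-- `f` is analytic inside and on the Bernstein ellipse `E_ρ`:
analytic on an open set containing the closed interior `D̄_ρ`. -/
def AnalyticOnBernstein (f : ℂ → ℂ) (ρ : ℝ) : Prop :=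
  ∃ U : Set ℂ, IsOpen U ∧ bernsteinDisk ρ ⊆ U ∧ ∀ z ∈ U, AnalyticAt ℂ f z

/-- The n-th Chebyshev coefficient of the first kind of f:
aₙ = (2/π) ∫_{-1}^1 f(x) Tₙ(x)/√(1-x²) dx. -/
def chebCoeffT (f : ℂ → ℂ) (n : ℕ) : ℂ :=
  (2 / π) * ∫ x in (-1:ℝ)..1,
    f x * ((Polynomial.Chebyshev.T ℝ n).eval x / Real.sqrt (1 - x ^ 2) : ℝ)

/-- The n-th Chebyshev coefficient of the second kind of f:
bₙ = (2/π) ∫_{-1}^1 √(1-x²) f(x) Uₙ(x) dx. -/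
def chebCoeffU (f : ℂ → ℂ) (n : ℕ) : ℂ :=
  (2 / π) * ∫ x in (-1:ℝ)..1,
    f x * ((Real.sqrt (1 - x ^ 2) * (Polynomial.Chebyshev.U ℝ n).eval x : ℝ))

/-- The m-point trapezoidal approximation aₙ(m,ρ) of the contour formula for aₙ. -/
def trapT (f : ℂ → ℂ) (ρ : ℝ) (n m : ℕ) : ℂ :=
  (2 / (m * ρ ^ n)) * ∑ j ∈ Finset.range m,
    f (joukowski ρ (2 * π * j / m)) * Complex.exp (-(2 * π * j * n / m) * Complex.I)

/-- The m-point trapezoidal approximation bₙ(m,ρ) of the contour formula for bₙ. -/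
def trapU (f : ℂ → ℂ) (ρ : ℝ) (n m : ℕ) : ℂ :=
  (1 / (m * ρ ^ n)) * ∑ j ∈ Finset.range m,
    f (joukowski ρ (2 * π * j / m)) *
      (1 - (ρ:ℂ)⁻¹ ^ 2 * Complex.exp (-(4 * π * j / m) * Complex.I)) *
      Complex.exp (-(2 * π * j * n / m) * Complex.I)

/-- The supremum norm ‖g‖_{E_ρ} of g on the Bernstein ellipse E_ρ. -/
def ellipseNorm (g : ℂ → ℂ) (ρ : ℝ) : ℝ :=
  sSup ((fun z => ‖g z‖) '' bernsteinEllipse ρ)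

/-- The polynomial s(z) = η₀/2 + ∑_{k=1}^{m-1} ηₖ Tₖ(z) of degree ≤ m−1 in Chebyshev form. -/
def chebPoly (η : ℕ → ℂ) (m : ℕ) (z : ℂ) : ℂ :=
  η 0 / 2 + ∑ k ∈ Finset.Icc 1 (m - 1), η k * (Polynomial.Chebyshev.T ℂ k).eval z

/-- M(ρ) = (1/π) ∫₀^{2π} |f(½(ρe^{iθ}+(ρe^{iθ})⁻¹))| dθ. -/
def Mfun (f : ℂ → ℂ) (ρ : ℝ) : ℝ :=
  (1 / π) * ∫ θ in (0:ℝ)..(2 * π), ‖f (joukowski ρ θ)‖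

section Aux
lemma jouk_cos (θ : ℝ) : joukowski 1 θ = (Real.cos θ : ℂ) := by
  simp only [joukowski, Complex.ofReal_one, one_mul, ← Complex.exp_neg,
    Complex.ofReal_cos, Complex.cos]
  ring_nf

lemma mem_disk_of_Icc {ρ : ℝ} (hρ : 1 ≤ ρ) {x : ℝ} (hx : x ∈ Set.Icc (-1:ℝ) 1) :
    (x : ℂ) ∈ bernsteinDisk ρ := by
  refine ⟨1, Real.arccos x, le_refl 1, hρ, ?_⟩
  rw [jouk_cos, Real.cos_arccos hx.1 hx.2]

lemma mem_disk_annulus {ρ : ℝ} (hρ : 1 ≤ ρ) {u : ℂ} (h1 : 1 ≤ ‖u‖)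
    (h2 : ‖u‖ ≤ ρ) : (u + u⁻¹) / 2 ∈ bernsteinDisk ρ := by
  refine ⟨‖u‖, Complex.arg u, h1, h2, ?_⟩
  rw [joukowski, Complex.norm_mul_exp_arg_mul_I]
end Aux
section Aux2
open MeasureTheory

lemma cos_image_Ioo : Real.cos '' Set.Ioo 0 π = Set.Ioo (-1:ℝ) 1 := by
  ext y
  constructor
  · rintro ⟨x, hx, rfl⟩
    constructor
    · have := Real.strictAntiOn_cos ⟨hx.1.le, hx.2.le⟩ ⟨le_of_lt (lt_of_le_of_lt hx.1.le hx.2), le_refl _⟩ hx.2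
      simpa [Real.cos_pi] using this
    · have := Real.strictAntiOn_cos ⟨le_refl 0, Real.pi_pos.le⟩ ⟨hx.1.le, hx.2.le⟩ hx.1
      simpa [Real.cos_zero] using this
  · rintro ⟨h1, h2⟩
    refine ⟨Real.arccos y, ⟨Real.arccos_pos.2 h2, ?_⟩, Real.cos_arccos h1.le h2.le⟩
    rcases lt_or_eq_of_le (Real.arccos_le_pi y) with h | h
    · exact h
    · exfalso
      have : y = -1 := by
        rw [← Real.cos_arccos h1.le h2.le, h, Real.cos_pi]
      linarith
end Aux2
section Aux3
open MeasureTheory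

lemma cheb_sub (f : ℂ → ℂ) (n : ℕ) :
    (∫ x in (-1:ℝ)..1,
        f x * ((Polynomial.Chebyshev.T ℝ n).eval x / Real.sqrt (1 - x ^ 2) : ℝ))
      = ∫ θ in (0:ℝ)..π, f (Real.cos θ : ℝ) * ((Real.cos (n * θ) : ℝ) : ℂ) := by
  set g : ℝ → ℂ := fun x =>
    f x * ((Polynomial.Chebyshev.T ℝ n).eval x / Real.sqrt (1 - x ^ 2) : ℝ) with hg
  have h1 : (∫ x in (-1:ℝ)..1, g x) = ∫ x in Set.Ioo (-1:ℝ) 1, g x := by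
    rw [intervalIntegral.integral_of_le (by norm_num : (-1:ℝ) ≤ 1),
      MeasureTheory.integral_Ioc_eq_integral_Ioo]
  rw [h1, ← cos_image_Ioo,
    integral_image_eq_integral_abs_deriv_smul measurableSet_Ioo
      (fun x _ => (Real.hasDerivAt_cos x).hasDerivWithinAt)
      (Real.injOn_cos.mono Set.Ioo_subset_Icc_self) g]
  have h2 : ∀ x ∈ Set.Ioo (0:ℝ) π,
      |(-Real.sin x)| • g (Real.cos x)
        = f (Real.cos x : ℝ) * ((Real.cos (n * x) : ℝ) : ℂ) := by
    intro x hx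
    have hs : 0 < Real.sin x := Real.sin_pos_of_pos_of_lt_pi hx.1 hx.2
    have hsq : Real.sqrt (1 - Real.cos x ^ 2) = Real.sin x := by
      rw [← Real.sin_sq, Real.sqrt_sq hs.le]
    have hT : (Polynomial.Chebyshev.T ℝ n).eval (Real.cos x) = Real.cos (n * x) := by
      have := Polynomial.Chebyshev.T_real_cos x n
      push_cast at this ⊢
      exact this
    have hsne : (Real.sin x : ℂ) ≠ 0 := Complex.ofReal_ne_zero.2 hs.ne'
    rw [hg]
    simp only [abs_neg, abs_of_pos hs, Complex.real_smul, hsq, hT, Complex.ofReal_div]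
    rw [mul_comm, mul_assoc, div_mul_cancel₀ _ hsne]
  rw [MeasureTheory.setIntegral_congr_fun measurableSet_Ioo h2]
  rw [intervalIntegral.integral_of_le Real.pi_pos.le,
    MeasureTheory.integral_Ioc_eq_integral_Ioo]
end Aux3
section Aux4
open MeasureTheory intervalIntegral

lemma cont_f_cos {f : ℂ → ℂ} {ρ : ℝ} (hρ : 1 ≤ ρ) (hf : AnalyticOnBernstein f ρ) :
    Continuous fun θ : ℝ => f (Real.cos θ : ℝ) := by
  obtain ⟨U, hUo, hUs, hUa⟩ := hf
  rw [continuous_iff_continuousAt]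
  intro t
  have hmem : ((Real.cos t : ℝ) : ℂ) ∈ bernsteinDisk ρ :=
    mem_disk_of_Icc hρ ⟨Real.neg_one_le_cos t, Real.cos_le_one t⟩
  exact ContinuousAt.comp (f := fun θ : ℝ => ((Real.cos θ : ℝ) : ℂ))
    ((hUa _ (hUs hmem)).continuousAt) (by fun_prop)

lemma sym_integral {f : ℂ → ℂ} {ρ : ℝ} (hρ : 1 ≤ ρ) (hf : AnalyticOnBernstein f ρ) (n : ℕ) :
    (∫ θ in (0:ℝ)..(2*π), f (Real.cos θ : ℝ) * Complex.exp (-((n:ℂ)*(θ:ℂ))*Complex.I))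
      = 2 * ∫ θ in (0:ℝ)..π, f (Real.cos θ : ℝ) * ((Real.cos (n*θ) : ℝ) : ℂ) := by
  have hc := cont_f_cos hρ hf
  set F : ℝ → ℂ := fun θ => f (Real.cos θ : ℝ) * Complex.exp (-((n:ℂ)*(θ:ℂ))*Complex.I) with hF
  set G : ℝ → ℂ := fun θ => f (Real.cos θ : ℝ) * Complex.exp (((n:ℂ)*(θ:ℂ))*Complex.I) with hG
  have hFc : Continuous F := hc.mul (Complex.continuous_exp.comp (by fun_prop))
  have hGc : Continuous G := hc.mul (Complex.continuous_exp.comp (by fun_prop))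
  have h1 : (∫ θ in (0:ℝ)..(2*π), F θ) = (∫ θ in (0:ℝ)..π, F θ) + ∫ θ in π..(2*π), F θ :=
    (integral_add_adjacent_intervals (hFc.intervalIntegrable _ _)
      (hFc.intervalIntegrable _ _)).symm
  have h3 : ∀ x : ℝ, F (2*π - x) = G x := by
    intro x
    simp only [hF, hG, Real.cos_two_pi_sub]
    congr 1
    have he : Complex.exp (-((n:ℂ)*((2*π - x : ℝ):ℂ))*Complex.I)
        = Complex.exp (((-n : ℤ):ℂ)*(2*(π:ℂ)*Complex.I))
          * Complex.exp (((n:ℂ)*(x:ℂ))*Complex.I) := by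
      rw [← Complex.exp_add]; congr 1; push_cast; ring
    rw [he, Complex.exp_int_mul_two_pi_mul_I, one_mul]
  have h2 : (∫ θ in π..(2*π), F θ) = ∫ θ in (0:ℝ)..π, G θ := by
    have := intervalIntegral.integral_comp_sub_left (a := 0) (b := π) F (2*π)
    simp only [h3] at this
    convert this.symm using 2 <;> ring
  have h5 : ∀ x : ℝ, F x + G x = 2 * (f (Real.cos x : ℝ) * ((Real.cos (n*x) : ℝ) : ℂ)) := by
    intro x
    simp only [hF, hG]
    have : ((Real.cos (n*x) : ℝ) : ℂ) = Complex.cos ((n:ℂ)*(x:ℂ)) := by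
      rw [Complex.ofReal_cos]; push_cast; ring_nf
    rw [this, ← mul_add]
    rw [show Complex.exp (-((n:ℂ)*(x:ℂ))*Complex.I) + Complex.exp (((n:ℂ)*(x:ℂ))*Complex.I)
      = 2 * Complex.cos ((n:ℂ)*(x:ℂ)) from by rw [Complex.two_cos]; ring]
    ring
  calc (∫ θ in (0:ℝ)..(2*π), F θ) = (∫ θ in (0:ℝ)..π, F θ) + ∫ θ in (0:ℝ)..π, G θ := by
        rw [h1, h2]
    _ = ∫ θ in (0:ℝ)..π, (F θ + G θ) :=
        (integral_add (hFc.intervalIntegrable _ _) (hGc.intervalIntegrable _ _)).symm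
    _ = ∫ θ in (0:ℝ)..π, 2 * (f (Real.cos θ : ℝ) * ((Real.cos (n*θ) : ℝ) : ℂ)) := by
        simp only [h5]
    _ = 2 * ∫ θ in (0:ℝ)..π, f (Real.cos θ : ℝ) * ((Real.cos (n*θ) : ℝ) : ℂ) :=
        intervalIntegral.integral_const_mul _ _
end Aux4
section Aux5
open MeasureTheory intervalIntegral Metric

lemma radius_indep {f : ℂ → ℂ} {ρ : ℝ} (hρ : 1 < ρ) (hf : AnalyticOnBernstein f ρ) (n : ℕ) :
    (∫ θ in (0:ℝ)..(2*π), f (joukowski ρ θ) * Complex.exp (-((n:ℂ)*(θ:ℂ))*Complex.I))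
      = (ρ:ℂ)^n * ∫ θ in (0:ℝ)..(2*π), f (joukowski 1 θ) * Complex.exp (-((n:ℂ)*(θ:ℂ))*Complex.I) := by
  obtain ⟨U, hUo, hUs, hUa⟩ := hf
  set g : ℂ → ℂ := fun u => f ((u + u⁻¹)/2) * (u^(n+1))⁻¹ with hg
  have hdiff : ∀ u : ℂ, 1 ≤ ‖u‖ → ‖u‖ ≤ ρ → DifferentiableAt ℂ g u := by
    intro u h1 h2
    have hu0 : u ≠ 0 := by
      intro h; rw [h] at h1; simp at h1; linarith
    have hJ : DifferentiableAt ℂ (fun u : ℂ => (u + u⁻¹)/2) u :=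
      (differentiableAt_id.add (differentiableAt_inv hu0)).div_const 2
    have hfd : DifferentiableAt ℂ f ((u + u⁻¹)/2) :=
      (hUa _ (hUs (mem_disk_annulus hρ.le h1 h2))).differentiableAt
    exact (hfd.comp u hJ).mul ((differentiableAt_id.pow (n+1)).inv (pow_ne_zero _ hu0))
  have key := circleIntegral_eq_of_differentiable_on_annulus_off_countable
    (c := 0) (r := 1) (R := ρ) (f := g) (s := ∅) one_pos hρ.le Set.countable_empty
    (fun u hu => by
      refine (hdiff u ?_ ?_).continuousAt.continuousWithinAt
      · have := hu.2; rw [mem_ball, Complex.dist_eq, sub_zero] at this; linarith [not_lt.1 this]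
      · have := hu.1; rwa [mem_closedBall, Complex.dist_eq, sub_zero] at this)
    (fun z hz => by
      refine hdiff z ?_ ?_
      · have := hz.1.2; rw [mem_closedBall, Complex.dist_eq, sub_zero] at this
        linarith [not_le.1 this]
      · have := hz.1.1; rw [mem_ball, Complex.dist_eq, sub_zero] at this; linarith)
  have hunf : ∀ r : ℝ, 0 < r → (∮ z in C(0, r), g z)
      = Complex.I * (((r:ℝ):ℂ)^n)⁻¹ *
        ∫ θ in (0:ℝ)..(2*π), f (joukowski r θ) * Complex.exp (-((n:ℂ)*(θ:ℂ))*Complex.I) := by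
    intro r hr
    have hrne : ((r:ℝ):ℂ) ≠ 0 := Complex.ofReal_ne_zero.2 hr.ne'
    rw [circleIntegral, ← intervalIntegral.integral_const_mul]
    apply intervalIntegral.integral_congr
    intro θ _
    simp only [deriv_circleMap, circleMap, zero_add, smul_eq_mul, hg, joukowski]
    have he2 : Complex.exp (-((n:ℂ)*(θ:ℂ))*Complex.I)
        = (Complex.exp ((θ:ℂ)*Complex.I)^n)⁻¹ := by
      rw [← Complex.exp_nat_mul, ← Complex.exp_neg]; congr 1; ring
    rw [he2, mul_pow]
    have hee : Complex.exp ((θ:ℂ)*Complex.I) ≠ 0 := Complex.exp_ne_zero _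
    field_simp
    ring
  rw [hunf ρ (lt_trans one_pos hρ), hunf 1 one_pos] at key
  simp only [Complex.ofReal_one, one_pow, inv_one, mul_one, one_mul] at key
  rw [mul_assoc] at key
  have key2 := mul_left_cancel₀ Complex.I_ne_zero key
  rwa [inv_mul_eq_iff_eq_mul₀ (pow_ne_zero n (Complex.ofReal_ne_zero.2
    (by linarith : ρ ≠ 0)))] at key2
end Aux5
/-- contour-integral expression for the Chebyshev coefficients
of the first kind of a function analytic inside and on the Bernstein ellipse. -/
theorem chebyshev_first_kind_contour_integral
    (ρ : ℝ) (hρ : 1 < ρ) (f : ℂ → ℂ) (hf : AnalyticOnBernstein f ρ) (n : ℕ) :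
    chebCoeffT f n = (1 / ((π : ℂ) * (ρ : ℂ) ^ n)) *
      ∫ θ in (0:ℝ)..(2 * π),
        f (joukowski ρ θ) * Complex.exp (-((n : ℂ) * (θ : ℂ)) * Complex.I) := by
  have hA := radius_indep hρ hf n
  simp only [jouk_cos] at hA
  have hS := sym_integral hρ.le hf n
  rw [chebCoeffT, cheb_sub f n, hA, hS]
  have hπ : ((π:ℝ):ℂ) ≠ 0 := Complex.ofReal_ne_zero.2 Real.pi_ne_zero
  have hρn : ((ρ:ℝ):ℂ)^n ≠ 0 :=
    pow_ne_zero _ (Complex.ofReal_ne_zero.2 (by linarith : ρ ≠ 0))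
  field_simp
end
end

section
/- Let ρ > 1 and let f be analytic inside and on the Bernstein ellipse E_ρ. Then for every integer n ≥ 0, the n-th Chebyshev coefficient of the second kind of f satisfies b_n = (1/(2π ρ^n)) ∫_0^{2π} f(½(ρe^{iθ} + (ρe^{iθ})^{-1})) (1 - (ρe^{iθ})^{-2}) e^{-inθ} dθ. -/
open Complex Real MeasureTheory Polynomial

noncomputable section

/-! ### Auxiliary lemmas -/

lemma joukowski_one_eq (θ : ℝ) : joukowski 1 θ = ((Real.cos θ : ℝ) : ℂ) := by
  rw [joukowski, Complex.ofReal_one, one_mul, ← Complex.exp_neg, Complex.ofReal_cos,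
    Complex.cos, neg_mul]

lemma exp_inv_pow' (n : ℕ) (θ : ℝ) :
    ((Complex.exp ((θ:ℂ)*Complex.I))⁻¹)^n = Complex.exp (-((n:ℂ)*(θ:ℂ))*Complex.I) := by
  rw [← Complex.exp_neg, ← Complex.exp_nat_mul]
  congr 1; ring

lemma trig_id' (n : ℕ) (θ : ℝ) :
    (1 - ((Complex.exp ((θ:ℂ)*Complex.I))⁻¹)^2) * Complex.exp (-((n:ℂ)*(θ:ℂ))*Complex.I)
      = 2 * ((Real.sin θ * Real.sin (((n:ℝ)+1)*θ) : ℝ) : ℂ)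
        + (2*Complex.I) * ((Real.sin θ * Real.cos (((n:ℝ)+1)*θ) : ℝ) : ℂ) := by
  set E := Complex.exp ((θ:ℂ)*Complex.I) with hEdef
  have hE : E ≠ 0 := Complex.exp_ne_zero _
  have h1 : E - E⁻¹ = 2 * ((Real.sin θ : ℝ) : ℂ) * Complex.I := by
    rw [hEdef, ← Complex.exp_neg, ← neg_mul, Complex.exp_mul_I, Complex.exp_mul_I,
      Complex.cos_neg, Complex.sin_neg, ← Complex.ofReal_sin]
    ring
  have h2 : (E⁻¹)^(n+1)
      = ((Real.cos (((n:ℝ)+1)*θ) : ℝ) : ℂ) - ((Real.sin (((n:ℝ)+1)*θ) : ℝ) : ℂ) * Complex.I := by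
    rw [hEdef, exp_inv_pow']
    rw [show (-((((n:ℕ)+1 : ℕ):ℂ)*(θ:ℂ)) : ℂ) = ((-(((n:ℝ)+1)*θ) : ℝ) : ℂ) by push_cast; ring]
    rw [Complex.exp_mul_I, ← Complex.ofReal_cos, ← Complex.ofReal_sin, Real.cos_neg, Real.sin_neg]
    push_cast; ring
  have hsplit : (1 : ℂ) - (E⁻¹)^2 = (E - E⁻¹) * E⁻¹ := by field_simp
  rw [show Complex.exp (-((n:ℂ)*(θ:ℂ))*Complex.I) = (E⁻¹)^n from (exp_inv_pow' n θ).symm,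
    hsplit, h1]
  rw [mul_assoc, ← pow_succ', h2, Complex.ofReal_mul, Complex.ofReal_mul]
  linear_combination (-2 * ((Real.sin θ : ℝ) : ℂ) * ((Real.sin (((n:ℝ)+1)*θ) : ℝ) : ℂ)) * Complex.I_sq

lemma subst_lemma (f : ℂ → ℂ) (hc : ContinuousOn (fun x : ℝ => f x) (Set.Icc (-1) 1)) (n : ℕ) :
    (∫ x in (-1:ℝ)..1,
        f x * ((Real.sqrt (1 - x ^ 2) * (Polynomial.Chebyshev.U ℝ n).eval x : ℝ) : ℂ))
      = ∫ θ in (0:ℝ)..π, f (Real.cos θ) * ((Real.sin θ * Real.sin (((n:ℝ)+1)*θ) : ℝ) : ℂ) := by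
  set G : ℝ → ℂ := fun x =>
    f x * ((Real.sqrt (1 - x ^ 2) * (Polynomial.Chebyshev.U ℝ n).eval x : ℝ) : ℂ) with hG
  have hGcont : ContinuousOn G (Set.Icc (-1:ℝ) 1) := by
    apply hc.mul
    refine (Complex.continuous_ofReal.comp ?_).continuousOn
    exact (Real.continuous_sqrt.comp (by continuity)).mul
      ((Polynomial.Chebyshev.U ℝ (n:ℤ)).continuous)
  have himg : Real.cos '' (Set.uIcc 0 π) ⊆ Set.Icc (-1:ℝ) 1 := by
    rintro y ⟨x, -, rfl⟩
    exact ⟨Real.neg_one_le_cos x, Real.cos_le_one x⟩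
  have h := intervalIntegral.integral_comp_smul_deriv' (a := 0) (b := π)
    (f := Real.cos) (f' := fun θ => -Real.sin θ) (g := G)
    (fun x _ => Real.hasDerivAt_cos x) (Real.continuous_sin.neg.continuousOn)
    (hGcont.mono himg)
  rw [Real.cos_zero, Real.cos_pi, intervalIntegral.integral_symm (-1) 1] at h
  have hcong : ∀ θ ∈ Set.uIcc (0:ℝ) π,
      (-Real.sin θ) • (G ∘ Real.cos) θ
        = -(f (Real.cos θ) * ((Real.sin θ * Real.sin (((n:ℝ)+1)*θ) : ℝ) : ℂ)) := by
    intro θ hθ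
    rw [Set.uIcc_of_le Real.pi_pos.le] at hθ
    have hs : Real.sqrt (1 - Real.cos θ ^ 2) = Real.sin θ :=
      (Real.sin_eq_sqrt_one_sub_cos_sq hθ.1 hθ.2).symm
    have hU : (Polynomial.Chebyshev.U ℝ (n:ℤ)).eval (Real.cos θ) * Real.sin θ
        = Real.sin (((n:ℝ)+1)*θ) := by
      have := Polynomial.Chebyshev.U_real_cos θ (n:ℤ)
      push_cast at this ⊢
      linarith
    have h2 : Real.sin θ * (Polynomial.Chebyshev.U ℝ (n:ℤ)).eval (Real.cos θ)
        = Real.sin (((n:ℝ)+1)*θ) := by rw [mul_comm]; exact hU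
    simp only [Function.comp, hG, hs, h2]
    rw [Complex.real_smul]
    push_cast
    ring
  rw [intervalIntegral.integral_congr hcong, intervalIntegral.integral_neg, neg_inj] at h
  exact h.symm

lemma reflect_split (h : ℝ → ℂ) (hc : Continuous h) :
    ∫ θ in (0:ℝ)..(2*π), h θ
      = (∫ θ in (0:ℝ)..π, h θ) + ∫ θ in (0:ℝ)..π, h (2*π - θ) := by
  have h2 : (∫ θ in (0:ℝ)..π, h (2*π - θ)) = ∫ θ in (2*π - π)..(2*π - 0), h θ :=
    intervalIntegral.integral_comp_sub_left h (2*π)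
  rw [h2, show 2*π - π = π by ring, sub_zero]
  exact (intervalIntegral.integral_add_adjacent_intervals
    (hc.intervalIntegrable _ _) (hc.intervalIntegrable _ _)).symm

lemma sin_nat_two_pi' (m : ℕ) : Real.sin ((m:ℝ)*(2*π)) = 0 := by
  rw [show ((m:ℝ))*(2*π) = ((2*m : ℕ) : ℝ)*π by push_cast; ring]
  exact Real.sin_nat_mul_pi _

lemma sin_reflect' (n : ℕ) (θ : ℝ) :
    Real.sin (((n:ℝ)+1)*(2*π - θ)) = -Real.sin (((n:ℝ)+1)*θ) := by
  rw [show ((n:ℝ)+1)*(2*π - θ) = ((n+1 : ℕ):ℝ)*(2*π) - ((n:ℝ)+1)*θ by push_cast; ring,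
    Real.sin_sub, sin_nat_two_pi', Real.cos_nat_mul_two_pi]
  ring

lemma cos_reflect' (n : ℕ) (θ : ℝ) :
    Real.cos (((n:ℝ)+1)*(2*π - θ)) = Real.cos (((n:ℝ)+1)*θ) := by
  rw [show ((n:ℝ)+1)*(2*π - θ) = ((n+1 : ℕ):ℝ)*(2*π) - ((n:ℝ)+1)*θ by push_cast; ring]
  exact Real.cos_nat_mul_two_pi_sub _ _

lemma int_ss (f : ℂ → ℂ) (hg : Continuous fun θ : ℝ => f (Real.cos θ)) (n : ℕ) :
    (∫ θ in (0:ℝ)..(2*π), f (Real.cos θ) * ((Real.sin θ * Real.sin (((n:ℝ)+1)*θ) : ℝ) : ℂ))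
      = 2 * ∫ θ in (0:ℝ)..π, f (Real.cos θ) * ((Real.sin θ * Real.sin (((n:ℝ)+1)*θ) : ℝ) : ℂ) := by
  have hcont : Continuous fun θ : ℝ =>
      f (Real.cos θ) * ((Real.sin θ * Real.sin (((n:ℝ)+1)*θ) : ℝ) : ℂ) :=
    hg.mul (Complex.continuous_ofReal.comp (by continuity))
  rw [reflect_split _ hcont]
  have : ∀ θ : ℝ,
      f (Real.cos (2*π - θ)) * ((Real.sin (2*π - θ) * Real.sin (((n:ℝ)+1)*(2*π - θ)) : ℝ) : ℂ)
      = f (Real.cos θ) * ((Real.sin θ * Real.sin (((n:ℝ)+1)*θ) : ℝ) : ℂ) := by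
    intro θ
    rw [Real.cos_two_pi_sub, Real.sin_two_pi_sub, sin_reflect']
    push_cast; ring
  simp only [this]
  ring

lemma int_sc (f : ℂ → ℂ) (hg : Continuous fun θ : ℝ => f (Real.cos θ)) (n : ℕ) :
    (∫ θ in (0:ℝ)..(2*π), f (Real.cos θ) * ((Real.sin θ * Real.cos (((n:ℝ)+1)*θ) : ℝ) : ℂ)) = 0 := by
  have hcont : Continuous fun θ : ℝ =>
      f (Real.cos θ) * ((Real.sin θ * Real.cos (((n:ℝ)+1)*θ) : ℝ) : ℂ) :=
    hg.mul (Complex.continuous_ofReal.comp (by continuity))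
  rw [reflect_split _ hcont]
  have : ∀ θ : ℝ,
      f (Real.cos (2*π - θ)) * ((Real.sin (2*π - θ) * Real.cos (((n:ℝ)+1)*(2*π - θ)) : ℝ) : ℂ)
      = -(f (Real.cos θ) * ((Real.sin θ * Real.cos (((n:ℝ)+1)*θ) : ℝ) : ℂ)) := by
    intro θ
    rw [Real.cos_two_pi_sub, Real.sin_two_pi_sub, cos_reflect']
    push_cast; ring
  simp only [this, intervalIntegral.integral_neg]
  ring

/-- contour-integral expression for the Chebyshev coefficients
of the second kind of a function analytic inside and on the Bernstein ellipse. -/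
theorem chebyshev_second_kind_contour_integral
    (ρ : ℝ) (hρ : 1 < ρ) (f : ℂ → ℂ) (hf : AnalyticOnBernstein f ρ) (n : ℕ) :
    chebCoeffU f n = (1 / (2 * (π : ℂ) * (ρ : ℂ) ^ n)) *
      ∫ θ in (0:ℝ)..(2 * π),
        f (joukowski ρ θ) *
          (1 - ((ρ : ℂ) * Complex.exp ((θ : ℂ) * Complex.I))⁻¹ ^ 2) *
          Complex.exp (-((n : ℂ) * (θ : ℂ)) * Complex.I) := by
  obtain ⟨U, hUo, hUsub, hU⟩ := hf
  have hρpos : (0:ℝ) < ρ := lt_trans one_pos hρ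
  -- continuity facts
  have hcIcc : ContinuousOn (fun x : ℝ => f x) (Set.Icc (-1:ℝ) 1) := by
    intro x hx
    have hmem : ((x:ℝ) : ℂ) ∈ bernsteinDisk ρ :=
      ⟨1, Real.arccos x, le_refl 1, hρ.le, by rw [joukowski_one_eq, Real.cos_arccos hx.1 hx.2]⟩
    exact ((hU _ (hUsub hmem)).continuousAt.comp
      Complex.continuous_ofReal.continuousAt).continuousWithinAt
  have hgcont : Continuous fun θ : ℝ => f (Real.cos θ) := by
    refine continuous_iff_continuousAt.2 fun θ => ?_
    have hmem : ((Real.cos θ : ℝ) : ℂ) ∈ bernsteinDisk ρ :=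
      ⟨1, θ, le_refl 1, hρ.le, (joukowski_one_eq θ).symm⟩
    exact ((hU _ (hUsub hmem)).continuousAt.comp
      Complex.continuous_ofReal.continuousAt).comp Real.continuous_cos.continuousAt
  -- the auxiliary function for the contour integral
  set F : ℂ → ℂ := fun z => f ((z + z⁻¹)/2) * ((1 - (z⁻¹)^2) * (z⁻¹)^(n+1)) with hFdef
  have hdiff : ∀ z ∈ Metric.closedBall (0:ℂ) ρ \ Metric.ball 0 1, DifferentiableAt ℂ F z := by
    intro z hz
    obtain ⟨hz1, hz2⟩ := hz
    rw [Metric.mem_closedBall, dist_zero_right] at hz1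
    rw [Metric.mem_ball, dist_zero_right, not_lt] at hz2
    have hz0 : z ≠ 0 := by
      intro h; rw [h, norm_zero] at hz2; linarith
    have hmem : (z + z⁻¹)/2 ∈ bernsteinDisk ρ :=
      ⟨‖z‖, Complex.arg z, by simpa using hz2,
        by simpa using hz1,
        by rw [joukowski, Complex.norm_mul_exp_arg_mul_I]⟩
    have hJ : DifferentiableAt ℂ (fun z : ℂ => (z + z⁻¹)/2) z :=
      (differentiableAt_id.add (differentiableAt_inv hz0)).div_const 2
    have hfz : DifferentiableAt ℂ (fun z : ℂ => f ((z + z⁻¹)/2)) z :=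
      ((hU _ (hUsub hmem)).differentiableAt).comp z hJ
    exact hfz.mul (((differentiableAt_const (1:ℂ)).sub
      ((differentiableAt_inv hz0).pow 2)).mul ((differentiableAt_inv hz0).pow (n+1)))
  have hann : (∮ z in C(0, ρ), F z) = ∮ z in C(0, 1), F z :=
    circleIntegral_eq_of_differentiable_on_annulus_off_countable one_pos hρ.le
      Set.countable_empty
      (fun z hz => (hdiff z hz).continuousAt.continuousWithinAt)
      (fun z hz => hdiff z ⟨Metric.ball_subset_closedBall hz.1.1,
        fun hb => hz.1.2 (Metric.ball_subset_closedBall hb)⟩)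
  have hcirc : ∀ R : ℝ, (∮ z in C(0, R), F z)
      = ∫ θ in (0:ℝ)..(2*π), ((R:ℂ) * Complex.exp ((θ:ℂ)*Complex.I) * Complex.I)
          * F ((R:ℂ) * Complex.exp ((θ:ℂ)*Complex.I)) := by
    intro R
    simp only [circleIntegral, deriv_circleMap, circleMap, zero_add, smul_eq_mul]
  have hkey : ∀ (R : ℝ), 0 < R → ∀ θ : ℝ,
      ((R:ℂ) * Complex.exp ((θ:ℂ)*Complex.I) * Complex.I)
          * F ((R:ℂ) * Complex.exp ((θ:ℂ)*Complex.I))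
        = (Complex.I * ((R:ℂ))⁻¹^n) * (f (joukowski R θ) *
            (1 - ((R:ℂ) * Complex.exp ((θ:ℂ)*Complex.I))⁻¹ ^ 2) *
            Complex.exp (-((n:ℂ)*(θ:ℂ))*Complex.I)) := by
    intro R hR θ
    have hz : ((R:ℂ) * Complex.exp ((θ:ℂ)*Complex.I)) ≠ 0 :=
      mul_ne_zero (Complex.ofReal_ne_zero.2 hR.ne') (Complex.exp_ne_zero _)
    have hj : joukowski R θ
        = (((R:ℂ) * Complex.exp ((θ:ℂ)*Complex.I))
            + ((R:ℂ) * Complex.exp ((θ:ℂ)*Complex.I))⁻¹)/2 := rfl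
    simp only [hFdef]
    rw [hj]
    set z := (R:ℂ) * Complex.exp ((θ:ℂ)*Complex.I) with hzdef
    rw [show (z⁻¹)^(n+1) = z⁻¹ * ((((R:ℂ))⁻¹)^n * Complex.exp (-((n:ℂ)*(θ:ℂ))*Complex.I)) by
      rw [pow_succ', hzdef, mul_inv, mul_pow, exp_inv_pow']]
    have hone : z * z⁻¹ = 1 := mul_inv_cancel₀ hz
    linear_combination (Complex.I * f ((z + z⁻¹)/2) * (1 - (z⁻¹)^2)
      * ((((R:ℂ))⁻¹)^n * Complex.exp (-((n:ℂ)*(θ:ℂ))*Complex.I))) * hone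
  -- the target integral
  set Itarget : ℂ := ∫ θ in (0:ℝ)..(2 * π),
      f (joukowski ρ θ) *
        (1 - ((ρ : ℝ) * Complex.exp ((θ : ℂ) * Complex.I))⁻¹ ^ 2) *
        Complex.exp (-((n : ℂ) * (θ : ℂ)) * Complex.I) with hIt
  have h1 : (∮ z in C(0, ρ), F z) = (Complex.I * ((ρ:ℂ))⁻¹^n) * Itarget := by
    rw [hcirc ρ, hIt]
    rw [intervalIntegral.integral_congr (g := fun θ : ℝ =>
      (Complex.I * ((ρ:ℂ))⁻¹^n) * (f (joukowski ρ θ) *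
        (1 - ((ρ:ℂ) * Complex.exp ((θ:ℂ)*Complex.I))⁻¹ ^ 2) *
        Complex.exp (-((n:ℂ)*(θ:ℂ))*Complex.I))) (fun θ _ => hkey ρ hρpos θ)]
    rw [intervalIntegral.integral_const_mul]
  set S : ℂ := ∫ θ in (0:ℝ)..π,
      f (Real.cos θ) * ((Real.sin θ * Real.sin (((n:ℝ)+1)*θ) : ℝ) : ℂ) with hS
  have h2 : (∮ z in C(0, 1), F z) = Complex.I * (4 * S) := by
    rw [hcirc 1]
    rw [intervalIntegral.integral_congr (g := fun θ : ℝ =>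
      Complex.I * (f (Real.cos θ) *
        (1 - ((Complex.exp ((θ:ℂ)*Complex.I))⁻¹)^2) *
        Complex.exp (-((n:ℂ)*(θ:ℂ))*Complex.I))) (fun θ _ => by
      rw [hkey 1 one_pos θ, joukowski_one_eq]
      push_cast
      simp [one_mul, inv_one, one_pow])]
    have hptw : ∀ θ : ℝ,
        Complex.I * (f (Real.cos θ) *
          (1 - ((Complex.exp ((θ:ℂ)*Complex.I))⁻¹)^2) *
          Complex.exp (-((n:ℂ)*(θ:ℂ))*Complex.I))
        = Complex.I * (2 * (f (Real.cos θ) * ((Real.sin θ * Real.sin (((n:ℝ)+1)*θ) : ℝ) : ℂ))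
            + (2*Complex.I) * (f (Real.cos θ) * ((Real.sin θ * Real.cos (((n:ℝ)+1)*θ) : ℝ) : ℂ))) := by
      intro θ
      rw [mul_assoc (f _), trig_id']
      ring
    simp only [hptw]
    rw [intervalIntegral.integral_const_mul]
    have hi1 : IntervalIntegrable (fun θ : ℝ =>
        2 * (f (Real.cos θ) * ((Real.sin θ * Real.sin (((n:ℝ)+1)*θ) : ℝ) : ℂ)))
        MeasureTheory.volume 0 (2*π) :=
      (continuous_const.mul (hgcont.mul
        (Complex.continuous_ofReal.comp (Real.continuous_sin.mul
          (Real.continuous_sin.comp (continuous_const.mul continuous_id)))))).intervalIntegrable _ _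
    have hi2 : IntervalIntegrable (fun θ : ℝ =>
        (2*Complex.I) * (f (Real.cos θ) * ((Real.sin θ * Real.cos (((n:ℝ)+1)*θ) : ℝ) : ℂ)))
        MeasureTheory.volume 0 (2*π) :=
      (continuous_const.mul (hgcont.mul
        (Complex.continuous_ofReal.comp (Real.continuous_sin.mul
          (Real.continuous_cos.comp (continuous_const.mul continuous_id)))))).intervalIntegrable _ _
    rw [intervalIntegral.integral_add hi1 hi2, intervalIntegral.integral_const_mul,
      intervalIntegral.integral_const_mul, int_ss f hgcont n, int_sc f hgcont n, hS]
    ring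
  -- put everything together
  have hρn : ((ρ:ℂ))^n ≠ 0 := pow_ne_zero _ (Complex.ofReal_ne_zero.2 hρpos.ne')
  have hπ : ((π:ℝ):ℂ) ≠ 0 := Complex.ofReal_ne_zero.2 Real.pi_ne_zero
  have hItval : Itarget = ((ρ:ℂ))^n * (4 * S) := by
    have h := h1.symm.trans (hann.trans h2)
    rw [inv_pow] at h
    field_simp at h
    rw [mul_assoc] at h
    exact h
  rw [chebCoeffU, subst_lemma f hcIcc n, ← hS, hItval]
  field_simp
  ring
end
end

section
/- Let ρ > 1 and let f be a polynomial of degree n. Then for every integer k ≥ 0 and every m ≥ k + n + 1, the m-point trapezoidal rule computes the k-th Chebyshev coefficient of the first kind of f exactly: a_k(m,ρ) = a_k. In particular, if m ≥ 2n + 1, then a_k(m,ρ) = a_k for all 0 ≤ k ≤ n. -/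
open Complex Real MeasureTheory Polynomial

noncomputable section

/-! ### Auxiliary lemmas -/

section Aux

open Polynomial.Chebyshev Set intervalIntegral

lemma wInt : IntervalIntegrable (fun x : ℝ => 1 / Real.sqrt (1 - x ^ 2)) volume (-1) 1 := by
  apply intervalIntegral.intervalIntegrable_deriv_of_nonneg (g := Real.arcsin)
    Real.continuous_arcsin.continuousOn
  · intro x hx
    rw [min_eq_left (by norm_num : (-1:ℝ) ≤ 1), max_eq_right (by norm_num : (-1:ℝ) ≤ 1)] at hx
    exact Real.hasDerivAt_arcsin (ne_of_gt hx.1) (ne_of_lt hx.2)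
  · intro x hx
    positivity

lemma gwInt (g : ℝ → ℝ) (hg : Continuous g) :
    IntervalIntegrable (fun x : ℝ => g x / Real.sqrt (1 - x ^ 2)) volume (-1) 1 := by
  have := wInt.continuousOn_mul hg.continuousOn
  simpa [div_eq_mul_inv, mul_comm, mul_assoc, mul_left_comm] using this

lemma pair_null : (volume : Measure ℝ) ({0, π} : Set ℝ) = 0 :=
  (Set.toFinite ({0, π} : Set ℝ)).measure_zero _

lemma subst_cos (g : ℝ → ℝ) (hg : Continuous g) :
    ∫ x in (-1:ℝ)..1, g x / Real.sqrt (1 - x ^ 2) = ∫ θ in (0:ℝ)..π, g (Real.cos θ) := by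
  set gw : ℝ → ℝ := fun x => g x / Real.sqrt (1 - x ^ 2) with hgw
  have himg : ∀ θ : ℝ, θ ∈ Ioo 0 π → Real.cos θ ∈ Ioo (-1:ℝ) 1 := by
    intro θ hθ
    have h1 : Real.cos θ < Real.cos 0 :=
      Real.strictAntiOn_cos ⟨le_refl 0, Real.pi_pos.le⟩ ⟨hθ.1.le, hθ.2.le⟩ hθ.1
    have h2 : Real.cos π < Real.cos θ :=
      Real.strictAntiOn_cos ⟨hθ.1.le, hθ.2.le⟩ ⟨Real.pi_pos.le, le_refl π⟩ hθ.2
    rw [Real.cos_zero] at h1; rw [Real.cos_pi] at h2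
    exact ⟨h2, h1⟩
  have hsqeq : ∀ θ : ℝ, θ ∈ Ioo 0 π →
      (-Real.sin θ) • (gw ∘ Real.cos) θ = -g (Real.cos θ) := by
    intro θ hθ
    have hsin : 0 < Real.sin θ := Real.sin_pos_of_pos_of_lt_pi hθ.1 hθ.2
    have hsq : Real.sqrt (1 - Real.cos θ ^ 2) = Real.sin θ := by
      rw [show 1 - Real.cos θ ^ 2 = Real.sin θ ^ 2 by
        have := Real.sin_sq_add_cos_sq θ; linarith]
      exact Real.sqrt_sq hsin.le
    simp only [gw, Function.comp, smul_eq_mul, hsq]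
    field_simp
  have hmem2 : ∀ θ : ℝ, θ ∈ Icc (0:ℝ) π → θ ∉ ({0, π} : Set ℝ) → θ ∈ Ioo (0:ℝ) π := by
    intro θ h1 h2
    simp only [Set.mem_insert_iff, Set.mem_singleton_iff, not_or] at h2
    exact ⟨lt_of_le_of_ne h1.1 (Ne.symm h2.1), lt_of_le_of_ne h1.2 h2.2⟩
  have key := intervalIntegral.integral_comp_smul_deriv''' (a := 0) (b := π)
    (f := Real.cos) (f' := fun θ => -Real.sin θ) (g := gw)
    (Real.continuous_cos.continuousOn)
    (fun x _ => (Real.hasDerivAt_cos x).hasDerivWithinAt)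
    ?_ ?_ ?_
  · rw [Real.cos_zero, Real.cos_pi] at key
    have hae : ∀ᵐ θ ∂(volume : Measure ℝ), θ ∈ Set.uIoc (0:ℝ) π →
        (fun θ => (fun θ => -Real.sin θ) θ • (gw ∘ Real.cos) θ) θ = -g (Real.cos θ) := by
      have hne : ∀ᵐ θ ∂(volume : Measure ℝ), θ ∉ ({0, π} : Set ℝ) :=
        MeasureTheory.compl_mem_ae_iff.mpr pair_null
      filter_upwards [hne] with θ h2 h1
      rw [Set.uIoc_of_le Real.pi_pos.le] at h1
      exact hsqeq θ (hmem2 θ ⟨h1.1.le, h1.2⟩ h2)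
    rw [intervalIntegral.integral_congr_ae hae] at key
    rw [intervalIntegral.integral_symm (-1:ℝ) 1] at key
    simp only [intervalIntegral.integral_neg] at key
    linarith [key]
  · intro u hu
    obtain ⟨θ, hθ, rfl⟩ := hu
    rw [min_eq_left Real.pi_pos.le, max_eq_right Real.pi_pos.le] at hθ
    have h2 := himg θ hθ
    have hne : Real.sqrt (1 - Real.cos θ ^ 2) ≠ 0 := by
      rw [Real.sqrt_ne_zero']
      nlinarith [h2.1, h2.2]
    have hc : ContinuousAt (fun x : ℝ => Real.sqrt (1 - x ^ 2)) (Real.cos θ) :=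
      (Real.continuous_sqrt.comp (by continuity)).continuousAt
    exact (hg.continuousAt.div hc hne).continuousWithinAt
  · have hIcc : IntegrableOn gw (Icc (-1:ℝ) 1) volume := by
      have := gwInt g hg
      rwa [intervalIntegrable_iff_integrableOn_Icc_of_le (by norm_num)] at this
    apply hIcc.mono_set
    intro u hu
    obtain ⟨θ, _, rfl⟩ := hu
    exact ⟨Real.neg_one_le_cos θ, Real.cos_le_one θ⟩
  · have hcont : Continuous fun θ : ℝ => -g (Real.cos θ) := by continuity
    rw [Set.uIcc_of_le Real.pi_pos.le]
    apply (hcont.integrableOn_Icc (μ := volume)).congr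
    have h1 : ∀ᵐ θ ∂(volume.restrict (Icc (0:ℝ) π)), θ ∈ Icc (0:ℝ) π :=
      MeasureTheory.ae_restrict_mem measurableSet_Icc
    have h2 : ∀ᵐ θ ∂(volume.restrict (Icc (0:ℝ) π)), θ ∉ ({0, π} : Set ℝ) :=
      MeasureTheory.ae_restrict_of_ae (MeasureTheory.compl_mem_ae_iff.mpr pair_null)
    filter_upwards [h1, h2] with θ hic hni
    exact (hsqeq θ (hmem2 θ hic hni)).symm

lemma Dint (c : ℝ) : ∫ θ in (0:ℝ)..π, Real.cos (c * θ) =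
    if c = 0 then π else Real.sin (c * π) / c := by
  by_cases hc : c = 0
  · simp [hc]
  · rw [if_neg hc]
    rw [intervalIntegral.integral_comp_mul_left (fun x => Real.cos x) hc]
    simp [integral_cos, hc, smul_eq_mul, div_eq_inv_mul]

lemma Dint_int (d : ℤ) : ∫ θ in (0:ℝ)..π, Real.cos ((d:ℝ) * θ) =
    if d = 0 then π else 0 := by
  rw [Dint]
  by_cases hd : d = 0
  · simp [hd]
  · rw [if_neg (by exact_mod_cast hd), if_neg hd, Real.sin_int_mul_pi, zero_div]

lemma cos_orth (a b : ℕ) : ∫ θ in (0:ℝ)..π, Real.cos (a * θ) * Real.cos (b * θ) =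
    if a = b then (if a = 0 then π else π / 2) else 0 := by
  have hid : ∀ θ : ℝ, Real.cos (a * θ) * Real.cos (b * θ) =
      (Real.cos (((a:ℤ) + b : ℤ) * θ) + Real.cos (((a:ℤ) - b : ℤ) * θ)) / 2 := by
    intro θ
    push_cast
    rw [add_mul, sub_mul, Real.cos_add, Real.cos_sub]
    ring
  simp only [hid]
  rw [intervalIntegral.integral_div]
  rw [intervalIntegral.integral_add (by apply Continuous.intervalIntegrable; continuity)
    (by apply Continuous.intervalIntegrable; continuity)]
  rw [Dint_int, Dint_int]
  by_cases hab : a = b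
  · subst hab
    by_cases ha : a = 0
    · subst ha; norm_num
    · rw [if_neg (by simpa using ha), if_pos (by ring), if_pos rfl, if_neg ha]
      ring
  · rw [if_neg (by omega), if_neg (by omega), if_neg hab]
    norm_num

lemma cheb_orth (a b : ℕ) :
    ∫ x in (-1:ℝ)..1,
      (Polynomial.Chebyshev.T ℝ a).eval x * ((Polynomial.Chebyshev.T ℝ b).eval x / Real.sqrt (1 - x ^ 2))
    = if a = b then (if a = 0 then π else π / 2) else 0 := by
  simp only [← mul_div_assoc]
  rw [subst_cos (fun x => (Polynomial.Chebyshev.T ℝ a).eval x * (Polynomial.Chebyshev.T ℝ b).eval x)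
    ((Polynomial.continuous _).mul (Polynomial.continuous _))]
  rw [← cos_orth a b]
  apply intervalIntegral.integral_congr
  intro θ _
  have ha := Polynomial.Chebyshev.T_real_cos θ a
  have hb := Polynomial.Chebyshev.T_real_cos θ b
  push_cast at ha hb
  simp only []
  show _ * _ = _
  rw [ha, hb]

end Aux
lemma T_eval_joukowski (r : ℝ) (hr : 0 < r) (θ : ℝ) (l : ℕ) :
    (Polynomial.Chebyshev.T ℂ l).eval (joukowski r θ) =
      ((r:ℂ)^l * Complex.exp ((l : ℂ) * θ * Complex.I) +
       (r:ℂ)⁻¹^l * Complex.exp (-((l : ℂ) * θ) * Complex.I)) / 2 := by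
  have hexp : Complex.exp (((θ:ℂ) - (Real.log r : ℂ) * Complex.I) * Complex.I)
      = (r : ℂ) * Complex.exp (θ * Complex.I) := by
    have : ((θ:ℂ) - (Real.log r : ℂ) * Complex.I) * Complex.I
        = (Real.log r : ℂ) + θ * Complex.I := by
      have h2 : (Complex.I : ℂ) * Complex.I = -1 := Complex.I_mul_I
      ring_nf
      rw [Complex.I_sq]
      ring
    rw [this, Complex.exp_add]
    congr 1
    rw [← Complex.ofReal_exp, Real.exp_log hr]
  have hexp' : Complex.exp (-((θ:ℂ) - (Real.log r : ℂ) * Complex.I) * Complex.I)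
      = ((r : ℂ) * Complex.exp (θ * Complex.I))⁻¹ := by
    rw [← hexp, ← Complex.exp_neg]
    ring_nf
  have hjou : joukowski r θ = Complex.cos ((θ:ℂ) - (Real.log r : ℂ) * Complex.I) := by
    unfold joukowski
    rw [Complex.cos, hexp, hexp']
  rw [hjou, Polynomial.Chebyshev.T_complex_cos]
  rw [Complex.cos]
  congr 2
  · rw [show ((l : ℤ) : ℂ) * ((θ:ℂ) - (Real.log r : ℂ) * Complex.I) * Complex.I
        = (l : ℕ) * (((θ:ℂ) - (Real.log r : ℂ) * Complex.I) * Complex.I) by push_cast; ring]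
    rw [Complex.exp_nat_mul, hexp, mul_pow, ← Complex.exp_nat_mul]
    ring_nf
  · rw [show -(((l : ℤ) : ℂ) * ((θ:ℂ) - (Real.log r : ℂ) * Complex.I)) * Complex.I
        = (l : ℕ) * (-((θ:ℂ) - (Real.log r : ℂ) * Complex.I) * Complex.I) by push_cast; ring]
    rw [Complex.exp_nat_mul, hexp', mul_inv, mul_pow, ← Complex.exp_neg, ← Complex.exp_nat_mul]
    ring_nf

lemma expsum (m : ℕ) (hm : 0 < m) (d : ℤ) :
    ∑ j ∈ Finset.range m, Complex.exp ((2 * (π:ℂ) * d * j / m) * Complex.I) =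
      if (m:ℤ) ∣ d then (m:ℂ) else 0 := by
  have hterm : ∀ j ∈ Finset.range m, Complex.exp ((2 * (π:ℂ) * d * j / m) * Complex.I)
      = Complex.exp ((2 * (π:ℂ) * d / m) * Complex.I) ^ j := by
    intro j _
    rw [← Complex.exp_nat_mul]
    congr 1
    ring
  rw [Finset.sum_congr rfl hterm]
  by_cases hdvd : (m:ℤ) ∣ d
  · obtain ⟨e, rfl⟩ := hdvd
    have hζ : Complex.exp ((2 * (π:ℂ) * ((m:ℤ) * e : ℤ) / m) * Complex.I) = 1 := by
      rw [show (2 * (π:ℂ) * ((m:ℤ) * e : ℤ) / m) * Complex.I = (e:ℂ) * (2 * π * Complex.I) by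
        have hm' : (m:ℂ) ≠ 0 := Nat.cast_ne_zero.mpr hm.ne'
        push_cast
        field_simp]
      exact Complex.exp_int_mul_two_pi_mul_I e
    rw [if_pos (Dvd.intro e rfl)]
    rw [Finset.sum_congr rfl (fun x _ => by rw [hζ, one_pow])]
    simp
  · rw [if_neg hdvd]
    have hζm : Complex.exp ((2 * (π:ℂ) * d / m) * Complex.I) ^ m = 1 := by
      rw [← Complex.exp_nat_mul]
      rw [show (m:ℂ) * ((2 * (π:ℂ) * d / m) * Complex.I) = (d:ℂ) * (2 * π * Complex.I) by
        have hm' : (m:ℂ) ≠ 0 := Nat.cast_ne_zero.mpr hm.ne'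
        field_simp]
      exact Complex.exp_int_mul_two_pi_mul_I d
    have hζ : Complex.exp ((2 * (π:ℂ) * d / m) * Complex.I) ≠ 1 := by
      intro h
      rw [Complex.exp_eq_one_iff] at h
      obtain ⟨e, he⟩ := h
      apply hdvd
      have hI : (Complex.I : ℂ) ≠ 0 := Complex.I_ne_zero
      have hm' : (m:ℂ) ≠ 0 := Nat.cast_ne_zero.mpr hm.ne'
      have hπ : ((π:ℝ):ℂ) ≠ 0 := Complex.ofReal_ne_zero.mpr Real.pi_ne_zero
      have he' : (2 * (π:ℂ) * d) * Complex.I = ((e:ℂ) * (2 * π) * m) * Complex.I := by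
        field_simp [hm'] at he
        linear_combination (2 * (π:ℂ) * Complex.I) * he
      have h2 : (2 * (π:ℂ) * d) = e * (2 * π) * m := mul_right_cancel₀ hI he'
      have h3 : (d : ℂ) = e * m := by
        have h4 : ((2:ℂ) * π) * d = (2 * π) * (e * m) := by linear_combination h2
        exact mul_left_cancel₀ (mul_ne_zero two_ne_zero hπ) h4
      have h5 : (d : ℤ) = e * m := by exact_mod_cast h3
      exact ⟨e, by linarith [h5]⟩
    rw [geom_sum_eq hζ, hζm]
    simp

lemma dvd_iff_eq (m l k : ℕ) (hm : k + l + 1 ≤ m) : ((m:ℤ) ∣ ((l:ℤ) - k)) ↔ l = k := by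
  constructor
  · intro h
    rcases lt_trichotomy l k with hc | hc | hc
    · have h2 : (m:ℤ) ∣ ((k:ℤ) - l) := by
        have := h.neg_right
        simpa using this
      have := Int.le_of_dvd (by omega : (0:ℤ) < (k:ℤ) - l) h2
      omega
    · exact hc
    · have := Int.le_of_dvd (by omega : (0:ℤ) < (l:ℤ) - k) h
      omega
  · intro h; subst h; simp

lemma dvd_iff_zero (m l k : ℕ) (hm : k + l + 1 ≤ m) :
    ((m:ℤ) ∣ (-((l:ℤ) + k))) ↔ (l = 0 ∧ k = 0) := by
  constructor
  · intro h
    have h2 : (m:ℤ) ∣ ((l:ℤ) + k) := by simpa using h.neg_right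
    by_contra hc
    have := Int.le_of_dvd (by omega : (0:ℤ) < (l:ℤ) + k) h2
    omega
  · rintro ⟨h1, h2⟩; subst h1; subst h2; simp

lemma trapT_T (ρ : ℝ) (hρ : 1 < ρ) (l k m : ℕ) (hm : k + l + 1 ≤ m) :
    trapT (fun z => (Polynomial.Chebyshev.T ℂ l).eval z) ρ k m
      = if l = k then (if k = 0 then 2 else 1) else 0 := by
  have hρ0 : (0:ℝ) < ρ := lt_trans one_pos hρ
  have hm0 : 0 < m := by omega
  have hmC : (m:ℂ) ≠ 0 := Nat.cast_ne_zero.mpr hm0.ne'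
  have hρC : (ρ:ℂ) ≠ 0 := Complex.ofReal_ne_zero.mpr hρ0.ne'
  unfold trapT
  have hterm : ∀ j ∈ Finset.range m,
      (Polynomial.Chebyshev.T ℂ l).eval (joukowski ρ (2 * π * j / m)) *
        Complex.exp (-(2 * (π:ℂ) * j * k / m) * Complex.I)
      = (ρ:ℂ)^l/2 * Complex.exp ((2 * (π:ℂ) * (((l:ℤ) - k) : ℤ) * j / m) * Complex.I)
        + (ρ:ℂ)⁻¹^l/2 * Complex.exp ((2 * (π:ℂ) * ((-((l:ℤ) + k)) : ℤ) * j / m) * Complex.I) := by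
    intro j _
    have e1 : Complex.exp ((l:ℂ) * (((2 * π * j / m : ℝ)):ℂ) * Complex.I) *
        Complex.exp (-(2 * (π:ℂ) * j * k / m) * Complex.I)
        = Complex.exp ((2 * (π:ℂ) * (((l:ℤ) - k) : ℤ) * j / m) * Complex.I) := by
      rw [← Complex.exp_add]; congr 1; push_cast; ring
    have e2 : Complex.exp (-((l:ℂ) * (((2 * π * j / m : ℝ)):ℂ)) * Complex.I) *
        Complex.exp (-(2 * (π:ℂ) * j * k / m) * Complex.I)
        = Complex.exp ((2 * (π:ℂ) * ((-((l:ℤ) + k)) : ℤ) * j / m) * Complex.I) := by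
      rw [← Complex.exp_add]; congr 1; push_cast; ring
    rw [T_eval_joukowski ρ hρ0 _ l]
    rw [div_mul_eq_mul_div, add_mul, mul_assoc ((ρ:ℂ)^l), mul_assoc ((ρ:ℂ)⁻¹^l), e1, e2]
    ring
  rw [Finset.sum_congr rfl hterm, Finset.sum_add_distrib, ← Finset.mul_sum, ← Finset.mul_sum]
  rw [expsum m hm0 (((l:ℤ) - k)), expsum m hm0 ((-((l:ℤ) + k)))]
  by_cases hlk : l = k
  · subst hlk
    by_cases hl : l = 0
    · subst hl
      rw [if_pos (by exact (dvd_iff_eq m 0 0 hm).mpr rfl), if_pos (by exact (dvd_iff_zero m 0 0 hm).mpr ⟨rfl, rfl⟩)]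
      simp
      field_simp
      norm_num
    · rw [if_pos (by exact (dvd_iff_eq m l l hm).mpr rfl),
        if_neg (by intro h; exact hl ((dvd_iff_zero m l l hm).mp h).1)]
      rw [if_pos rfl, if_neg hl]
      field_simp
      ring
  · rw [if_neg (by intro h; exact hlk ((dvd_iff_eq m l k hm).mp h)),
      if_neg (by intro h; obtain ⟨h1, h2⟩ := (dvd_iff_zero m l k hm).mp h; exact hlk (h1.trans h2.symm)),
      if_neg hlk]
    ring
section Aux2

open Polynomial.Chebyshev Set intervalIntegral

lemma chebCoeffT_T (l k : ℕ) :
    chebCoeffT (fun z => (Polynomial.Chebyshev.T ℂ l).eval z) k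
      = if l = k then (if k = 0 then 2 else 1) else 0 := by
  unfold chebCoeffT
  have hπ : ((π:ℝ):ℂ) ≠ 0 := Complex.ofReal_ne_zero.mpr Real.pi_ne_zero
  have hintg : ∀ x : ℝ, (Polynomial.Chebyshev.T ℂ l).eval (x:ℂ) *
      (((Polynomial.Chebyshev.T ℝ k).eval x / Real.sqrt (1 - x ^ 2) : ℝ) : ℂ)
      = (((Polynomial.Chebyshev.T ℝ l).eval x *
          ((Polynomial.Chebyshev.T ℝ k).eval x / Real.sqrt (1 - x ^ 2)) : ℝ) : ℂ) := by
    intro x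
    rw [← Polynomial.Chebyshev.complex_ofReal_eval_T, ← Complex.ofReal_mul]
  simp only [hintg]
  have hOf : (∫ x in (-1:ℝ)..1, (((Polynomial.Chebyshev.T ℝ l).eval x *
        ((Polynomial.Chebyshev.T ℝ k).eval x / Real.sqrt (1 - x ^ 2)) : ℝ) : ℂ))
      = (((∫ x in (-1:ℝ)..1, (Polynomial.Chebyshev.T ℝ l).eval x *
        ((Polynomial.Chebyshev.T ℝ k).eval x / Real.sqrt (1 - x ^ 2))) : ℝ) : ℂ) :=
    RCLike.intervalIntegral_ofReal
  rw [hOf]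
  rw [cheb_orth l k]
  by_cases hlk : l = k
  · subst hlk
    by_cases hl : l = 0
    · subst hl
      simp only [if_pos rfl, if_true]
      field_simp
    · rw [if_pos rfl, if_pos rfl, if_neg hl, if_neg hl]
      push_cast
      field_simp
  · rw [if_neg hlk, if_neg hlk]
    simp

lemma intCheb (q : Polynomial ℂ) (k : ℕ) :
    IntervalIntegrable (fun x : ℝ => q.eval (x:ℂ) *
      (((Polynomial.Chebyshev.T ℝ k).eval x / Real.sqrt (1 - x ^ 2) : ℝ) : ℂ)) volume (-1) 1 := by
  have h := gwInt (fun x => (Polynomial.Chebyshev.T ℝ k).eval x) (Polynomial.continuous _)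
  have hw : IntervalIntegrable (fun x : ℝ =>
      (((Polynomial.Chebyshev.T ℝ k).eval x / Real.sqrt (1 - x ^ 2) : ℝ) : ℂ)) volume (-1) 1 :=
    ⟨h.1.ofReal, h.2.ofReal⟩
  exact hw.continuousOn_mul ((q.continuous.comp Complex.continuous_ofReal).continuousOn)

lemma chebCoeffT_add (q r : Polynomial ℂ) (k : ℕ) :
    chebCoeffT (fun z => (q + r).eval z) k
      = chebCoeffT (fun z => q.eval z) k + chebCoeffT (fun z => r.eval z) k := by
  unfold chebCoeffT
  rw [← mul_add, ← intervalIntegral.integral_add (intCheb q k) (intCheb r k)]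
  congr 1
  apply intervalIntegral.integral_congr
  intro x _
  simp only [Polynomial.eval_add, add_mul]

lemma chebCoeffT_smul (c : ℂ) (q : Polynomial ℂ) (k : ℕ) :
    chebCoeffT (fun z => (c • q).eval z) k = c * chebCoeffT (fun z => q.eval z) k := by
  unfold chebCoeffT
  have : (∫ x in (-1:ℝ)..1, (c • q).eval (x:ℂ) *
      (((Polynomial.Chebyshev.T ℝ k).eval x / Real.sqrt (1 - x ^ 2) : ℝ) : ℂ))
      = c * ∫ x in (-1:ℝ)..1, q.eval (x:ℂ) *
      (((Polynomial.Chebyshev.T ℝ k).eval x / Real.sqrt (1 - x ^ 2) : ℝ) : ℂ) := by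
    rw [← intervalIntegral.integral_const_mul]
    apply intervalIntegral.integral_congr
    intro x _
    simp only [Polynomial.eval_smul, smul_eq_mul, mul_assoc]
  rw [this]
  ring

lemma chebCoeffT_zero_poly (k : ℕ) :
    chebCoeffT (fun z => (0 : Polynomial ℂ).eval z) k = 0 := by
  unfold chebCoeffT
  simp

lemma trapT_add (ρ : ℝ) (q r : Polynomial ℂ) (k m : ℕ) :
    trapT (fun z => (q + r).eval z) ρ k m
      = trapT (fun z => q.eval z) ρ k m + trapT (fun z => r.eval z) ρ k m := by
  unfold trapT
  rw [← mul_add, ← Finset.sum_add_distrib]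
  congr 1
  apply Finset.sum_congr rfl
  intro j _
  simp only [Polynomial.eval_add, add_mul]

lemma trapT_smul (ρ : ℝ) (c : ℂ) (q : Polynomial ℂ) (k m : ℕ) :
    trapT (fun z => (c • q).eval z) ρ k m = c * trapT (fun z => q.eval z) ρ k m := by
  unfold trapT
  simp only [Polynomial.eval_smul, smul_eq_mul]
  rw [Finset.sum_congr rfl (fun j (_ : j ∈ Finset.range m) => (mul_assoc c _ _))]
  rw [← Finset.mul_sum]
  ring

lemma trapT_zero_poly (ρ : ℝ) (k m : ℕ) :
    trapT (fun z => (0 : Polynomial ℂ).eval z) ρ k m = 0 := by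
  unfold trapT
  simp

lemma T_deg : ∀ i : ℕ, (Polynomial.Chebyshev.T ℂ i).natDegree ≤ i ∧
    (Polynomial.Chebyshev.T ℂ i).coeff i = (if i = 0 then 1 else 2^(i-1)) := by
  intro i
  induction i using Nat.strong_induction_on with
  | _ i ih =>
    match i with
    | 0 => exact ⟨by simp [Polynomial.Chebyshev.T_zero], by simp [Polynomial.Chebyshev.T_zero]⟩
    | 1 => exact ⟨by simp [Polynomial.Chebyshev.T_one], by simp [Polynomial.Chebyshev.T_one]⟩
    | (j+2) =>
      have h1 := ih (j+1) (by omega)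
      have h0 := ih j (by omega)
      have heq : Polynomial.Chebyshev.T ℂ ((j+2 : ℕ) : ℤ)
          = 2 * Polynomial.X * Polynomial.Chebyshev.T ℂ ((j+1:ℕ):ℤ)
            - Polynomial.Chebyshev.T ℂ (j:ℤ) := by
        rw [show ((j+2 : ℕ) : ℤ) = (j:ℤ) + 2 by push_cast; ring,
          show ((j+1 : ℕ) : ℤ) = (j:ℤ) + 1 by push_cast; ring]
        exact Polynomial.Chebyshev.T_add_two ℂ (j:ℤ)
      have hdeg2X : (2 * Polynomial.X * Polynomial.Chebyshev.T ℂ ((j+1:ℕ):ℤ)).natDegree ≤ j + 2 := by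
        apply le_trans (Polynomial.natDegree_mul_le)
        have hx : (2 * Polynomial.X : Polynomial ℂ).natDegree ≤ 1 := by
          apply le_trans (Polynomial.natDegree_mul_le)
          simp
        omega
      constructor
      · rw [heq]
        apply le_trans (Polynomial.natDegree_sub_le _ _)
        exact max_le hdeg2X (le_trans h0.1 (by omega))
      · rw [heq, Polynomial.coeff_sub]
        have hc0 : (Polynomial.Chebyshev.T ℂ (j:ℤ)).coeff (j+2) = 0 :=
          Polynomial.coeff_eq_zero_of_natDegree_lt (lt_of_le_of_lt h0.1 (by omega))
        have hc1 : (2 * Polynomial.X * Polynomial.Chebyshev.T ℂ ((j+1:ℕ):ℤ)).coeff (j+2)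
            = 2 * (Polynomial.Chebyshev.T ℂ ((j+1:ℕ):ℤ)).coeff (j+1) := by
          rw [show (2 * Polynomial.X * Polynomial.Chebyshev.T ℂ ((j+1:ℕ):ℤ))
              = Polynomial.C 2 * (Polynomial.X * Polynomial.Chebyshev.T ℂ ((j+1:ℕ):ℤ)) by
            rw [map_ofNat]; ring]
          rw [Polynomial.coeff_C_mul, Polynomial.coeff_X_mul]
        rw [hc1, hc0, h1.2, if_neg (by omega : ¬ j + 1 = 0), if_neg (by omega : ¬ j + 2 = 0)]
        rw [show j + 1 - 1 = j by omega, show j + 2 - 1 = j + 1 by omega, pow_succ]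
        ring

lemma mem_spanT (n : ℕ) : ∀ i : ℕ, i ≤ n → ∀ q : Polynomial ℂ, q.natDegree ≤ i →
    q ∈ Submodule.span ℂ ((fun l : ℕ => Polynomial.Chebyshev.T ℂ (l:ℤ)) '' Set.Iic n) := by
  intro i
  induction i using Nat.strong_induction_on with
  | _ i ih =>
    intro hin q hq
    by_cases h0 : i = 0
    · subst h0
      rw [Polynomial.eq_C_of_natDegree_le_zero hq]
      rw [show Polynomial.C (q.coeff 0) = q.coeff 0 • Polynomial.Chebyshev.T ℂ ((0:ℕ):ℤ) by
        rw [Polynomial.smul_eq_C_mul]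
        simp [Polynomial.Chebyshev.T_zero]]
      exact Submodule.smul_mem _ _ (Submodule.subset_span ⟨0, by simp, rfl⟩)
    · have hi1 : 1 ≤ i := by omega
      have hT := T_deg i
      set c := q.coeff i / (2^(i-1) : ℂ) with hc
      set r := q - Polynomial.C c * Polynomial.Chebyshev.T ℂ (i:ℤ) with hr
      have hrd : r.natDegree ≤ i - 1 := by
        rw [Polynomial.natDegree_le_iff_coeff_eq_zero]
        intro N hN
        have hiN : i ≤ N := by omega
        rcases eq_or_lt_of_le hiN with hNi | hNi
        · subst hNi
          rw [hr, Polynomial.coeff_sub, Polynomial.coeff_C_mul, hT.2, if_neg h0, hc]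
          field_simp
          ring
        · rw [hr, Polynomial.coeff_sub, Polynomial.coeff_C_mul,
            Polynomial.coeff_eq_zero_of_natDegree_lt (lt_of_le_of_lt hq hNi),
            Polynomial.coeff_eq_zero_of_natDegree_lt (lt_of_le_of_lt hT.1 hNi)]
          ring
      have hrmem := ih (i-1) (by omega) (by omega) r hrd
      have hq_eq : q = r + Polynomial.C c * Polynomial.Chebyshev.T ℂ (i:ℤ) := by
        rw [hr]; ring
      rw [hq_eq]
      apply Submodule.add_mem _ hrmem
      rw [Polynomial.C_mul']
      exact Submodule.smul_mem _ _ (Submodule.subset_span ⟨i, by simpa using hin, rfl⟩)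

end Aux2
/-- the trapezoidal rule computes the Chebyshev coefficients of the
first kind of a polynomial of degree n exactly, provided m ≥ k + n + 1; in
particular all of them for 0 ≤ k ≤ n are exact once m ≥ 2n + 1. -/
theorem trapezoidal_exact_for_polynomials_first_kind
    (ρ : ℝ) (hρ : 1 < ρ) (n : ℕ) (p : Polynomial ℂ) (hp : p.natDegree = n) :
    (∀ k m : ℕ, m ≥ k + n + 1 →
      trapT (fun z => p.eval z) ρ k m = chebCoeffT (fun z => p.eval z) k) ∧
    (∀ m : ℕ, m ≥ 2 * n + 1 → ∀ k : ℕ, k ≤ n →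
      trapT (fun z => p.eval z) ρ k m = chebCoeffT (fun z => p.eval z) k) := by
  have main : ∀ k m : ℕ, m ≥ k + n + 1 →
      trapT (fun z => p.eval z) ρ k m = chebCoeffT (fun z => p.eval z) k := by
    intro k m hm
    have hsp : p ∈ Submodule.span ℂ ((fun l : ℕ => Polynomial.Chebyshev.T ℂ (l:ℤ)) '' Set.Iic n) :=
      mem_spanT n n le_rfl p (le_of_eq hp)
    refine Submodule.span_induction
      (p := fun q _ => trapT (fun z => q.eval z) ρ k m = chebCoeffT (fun z => q.eval z) k)
      ?_ ?_ ?_ ?_ hsp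
    · rintro x ⟨l, hl, rfl⟩
      simp only [Set.mem_Iic] at hl
      rw [trapT_T ρ hρ l k m (by omega), chebCoeffT_T l k]
    · show trapT (fun z => (0 : Polynomial ℂ).eval z) ρ k m
          = chebCoeffT (fun z => (0 : Polynomial ℂ).eval z) k
      rw [trapT_zero_poly, chebCoeffT_zero_poly]
    · intro x y hx hy hhx hhy
      show trapT (fun z => (x + y).eval z) ρ k m = chebCoeffT (fun z => (x + y).eval z) k
      rw [trapT_add, chebCoeffT_add]
      exact congrArg₂ (· + ·) hhx hhy
    · intro a x hx hhx
      show trapT (fun z => (a • x).eval z) ρ k m = chebCoeffT (fun z => (a • x).eval z) k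
      rw [trapT_smul, chebCoeffT_smul]
      exact congrArg (a * ·) hhx
  exact ⟨main, fun m hm k hk => main k m (by omega)⟩
end
end

section
/- Let ρ > 1 and let f be a polynomial of degree n. Then for every integer k ≥ 0 and every m ≥ k + n + 3, the m-point trapezoidal rule computes the k-th Chebyshev coefficient of the second kind of f exactly: b_k(m,ρ) = b_k. In particular, if m ≥ 2n + 3, then b_k(m,ρ) = b_k for all 0 ≤ k ≤ n. -/
open Complex Real MeasureTheory Polynomial

noncomputable section

section TrapAux


-- roots of unity sum
lemma rou (m : ℕ) (hm : 0 < m) (l : ℤ) :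
    ∑ j ∈ Finset.range m, Complex.exp (2 * π * Complex.I * l * j / m) =
      if (m : ℤ) ∣ l then (m : ℂ) else 0 := by
  have hm' : (m : ℂ) ≠ 0 := Nat.cast_ne_zero.mpr hm.ne'
  set ζ : ℂ := Complex.exp (2 * π * Complex.I * l / m) with hζ
  have hpow : ∀ j : ℕ, Complex.exp (2 * π * Complex.I * l * j / m) = ζ ^ j := by
    intro j
    rw [hζ, ← Complex.exp_nat_mul]
    ring_nf
  simp only [hpow]
  by_cases hdvd : (m : ℤ) ∣ l
  · obtain ⟨c, rfl⟩ := hdvd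
    have : ζ = 1 := by
      rw [hζ, Complex.exp_eq_one_iff]
      exact ⟨c, by push_cast; field_simp⟩
    simp [this]
  · have hζ1 : ζ ≠ 1 := by
      intro h
      rw [hζ, Complex.exp_eq_one_iff] at h
      obtain ⟨c, hc⟩ := h
      apply hdvd
      have key : True := trivial
      have : (l : ℂ) = c * (m : ℂ) := by
        have hπ : (π : ℂ) ≠ 0 := by exact_mod_cast Real.pi_ne_zero
        have h2 : (2 : ℂ) * π * Complex.I ≠ 0 := by
          simp [Complex.I_ne_zero, hπ]
        field_simp at hc
        have : (l : ℂ) = c * m := by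
          apply mul_left_cancel₀ h2
          rw [hc]; ring
        exact this
      have h3 : l = c * (m:ℤ) := by exact_mod_cast this
      exact ⟨c, by rw [h3, mul_comm]⟩
    rw [geom_sum_eq hζ1]
    have : ζ ^ m = 1 := by
      rw [hζ, ← Complex.exp_nat_mul, Complex.exp_eq_one_iff]
      exact ⟨l, by field_simp⟩
    simp [this, hdvd]




lemma sin_exp' (z : ℂ) : 2 * Complex.I * Complex.sin z
    = Complex.exp (z * Complex.I) - Complex.exp (-(z * Complex.I)) := by
  rw [Complex.sin, neg_mul]
  have hI : Complex.I * Complex.I = -1 := Complex.I_mul_I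
  linear_combination (Complex.exp (-(z * Complex.I)) - Complex.exp (z * Complex.I)) * hI

lemma cos_exp' (z : ℂ) : Complex.cos z
    = (Complex.exp (z * Complex.I) + Complex.exp (-(z * Complex.I))) / 2 := by
  rw [Complex.cos, neg_mul]

lemma jouk_U (ρ θ : ℝ) (hρ : 0 < ρ) (d : ℕ) :
    (Polynomial.Chebyshev.U ℂ d).eval (joukowski ρ θ) *
      (1 - ((ρ : ℂ) * Complex.exp (θ * Complex.I))⁻¹ ^ 2) =
    ((ρ : ℂ) * Complex.exp (θ * Complex.I)) ^ d -
      ((ρ : ℂ) * Complex.exp (θ * Complex.I))⁻¹ ^ (d + 2) := by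
  set u : ℂ := (ρ : ℂ) * Complex.exp (θ * Complex.I) with hu
  set w : ℂ := (θ : ℂ) - Complex.I * Real.log ρ with hw
  have huw : u = Complex.exp (w * Complex.I) := by
    have harg : w * Complex.I = (Real.log ρ : ℂ) + θ * Complex.I := by
      rw [hw]; ring_nf; rw [Complex.I_sq]; ring
    rw [harg, Complex.exp_add, ← Complex.ofReal_exp, Real.exp_log hρ, hu]
  have huinv : u⁻¹ = Complex.exp (-(w * Complex.I)) := by
    rw [huw, ← Complex.exp_neg]
  have hjouk : joukowski ρ θ = Complex.cos w := by
    rw [joukowski, cos_exp', ← hu, huw, Complex.exp_neg]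
  have hU := Polynomial.Chebyshev.U_complex_cos w d
  have hexp2 : ∀ (k : ℕ) (z : ℂ), Complex.exp z ^ k = Complex.exp (k * z) :=
    fun k z => (Complex.exp_nat_mul z k).symm
  have hfac : 1 - u⁻¹ ^ 2 = Complex.sin w * (2 * Complex.I * Complex.exp (-(w * Complex.I))) := by
    rw [huinv, hexp2]
    have h2 : ((2:ℕ):ℂ) * -(w * Complex.I) = -(w * Complex.I) + -(w * Complex.I) := by
      push_cast; ring
    rw [h2, Complex.exp_add]
    have hs := sin_exp' w
    have he : Complex.exp (w * Complex.I) * Complex.exp (-(w * Complex.I)) = 1 := by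
      rw [← Complex.exp_add]; simp
    linear_combination (-Complex.exp (-(w * Complex.I))) * hs - he
  have hs2 := sin_exp' (((d : ℂ) + 1) * w)
  have hUc : Complex.sin (((d : ℤ) + 1) * w) = Complex.sin (((d : ℂ) + 1) * w) := by
    push_cast; ring_nf
  calc (Polynomial.Chebyshev.U ℂ d).eval (joukowski ρ θ) * (1 - u⁻¹ ^ 2)
      = ((Polynomial.Chebyshev.U ℂ d).eval (Complex.cos w) * Complex.sin w) *
        (2 * Complex.I * Complex.exp (-(w * Complex.I))) := by
        rw [hjouk, hfac]; ring
    _ = (2 * Complex.I * Complex.sin (((d : ℂ) + 1) * w)) * Complex.exp (-(w * Complex.I)) := by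
        rw [hU, hUc]; ring
    _ = (Complex.exp ((((d:ℂ) + 1) * w) * Complex.I)
          - Complex.exp (-((((d:ℂ)+1) * w) * Complex.I))) * Complex.exp (-(w * Complex.I)) := by
        rw [hs2]
    _ = u ^ d - u⁻¹ ^ (d + 2) := by
        rw [huw, ← Complex.exp_neg, hexp2, hexp2, sub_mul, ← Complex.exp_add, ← Complex.exp_add]
        congr 2 <;> push_cast <;> ring




lemma trapU_cheb (ρ : ℝ) (hρ : 1 < ρ) (d k m : ℕ) (hm : m ≥ k + d + 3) :
    trapU (fun z => (Polynomial.Chebyshev.U ℂ d).eval z) ρ k m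
      = if k = d then 1 else 0 := by
  have hρ0 : (0:ℝ) < ρ := lt_trans one_pos hρ
  have hρc : (ρ : ℂ) ≠ 0 := by exact_mod_cast hρ0.ne'
  have hm0 : 0 < m := by omega
  have hmc : (m : ℂ) ≠ 0 := Nat.cast_ne_zero.mpr hm0.ne'
  have hmr : (m : ℝ) ≠ 0 := Nat.cast_ne_zero.mpr hm0.ne'
  have key : ∀ j ∈ Finset.range m,
      (Polynomial.Chebyshev.U ℂ d).eval (joukowski ρ (2 * π * j / m)) *
        (1 - (ρ:ℂ)⁻¹ ^ 2 * Complex.exp (-(4 * π * j / m) * Complex.I)) *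
        Complex.exp (-(2 * π * j * k / m) * Complex.I)
      = (ρ:ℂ)^d * Complex.exp (2 * π * Complex.I * (((d:ℤ) - k)) * j / m)
        - ((ρ:ℂ)⁻¹)^(d+2) * Complex.exp (2 * π * Complex.I * ((-((d:ℤ)+k+2))) * j / m) := by
    intro j _
    set θj : ℝ := 2 * π * j / m with hθj
    have hcoe : (θj : ℂ) = 2 * π * j / m := by rw [hθj]; push_cast; ring
    have hfac : (ρ:ℂ)⁻¹ ^ 2 * Complex.exp (-(4 * π * j / m) * Complex.I)
        = ((ρ : ℂ) * Complex.exp (θj * Complex.I))⁻¹ ^ 2 := by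
      rw [mul_inv, ← Complex.exp_neg, mul_pow, ← Complex.exp_nat_mul]
      congr 1
      rw [hcoe]; push_cast; ring
    rw [hfac, jouk_U ρ θj hρ0 d]
    have e1 : Complex.exp (θj*Complex.I)^d * Complex.exp (-(2*π*j*k/m)*Complex.I)
        = Complex.exp (2*π*Complex.I*((d:ℤ)-k)*j/m) := by
      rw [← Complex.exp_nat_mul, ← Complex.exp_add]
      congr 1; rw [hcoe]; push_cast; ring
    have e2 : Complex.exp (-(θj*Complex.I))^(d+2) * Complex.exp (-(2*π*j*k/m)*Complex.I)
        = Complex.exp (2*π*Complex.I*(-((d:ℤ)+k+2))*j/m) := by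
      rw [← Complex.exp_nat_mul, ← Complex.exp_add]
      congr 1; rw [hcoe]; push_cast; ring
    rw [sub_mul]
    congr 1
    · rw [mul_pow, mul_assoc, e1]
    · rw [mul_inv, ← Complex.exp_neg, mul_pow, mul_assoc, e2]
  rw [trapU]
  have r1 := rou m hm0 ((d:ℤ) - k)
  have r2 := rou m hm0 (-((d:ℤ)+k+2))
  push_cast at r1 r2
  rw [Finset.sum_congr rfl key, Finset.sum_sub_distrib, ← Finset.mul_sum, ← Finset.mul_sum]
  push_cast
  rw [r1, r2]
  have h1 : ((m:ℤ) ∣ ((d:ℤ) - k)) ↔ d = k := by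
    constructor
    · intro h
      have := Int.eq_zero_of_abs_lt_dvd h (by
        rw [abs_lt]; omega)
      omega
    · rintro rfl; simp
  have h2 : ¬ ((m:ℤ) ∣ (-((d:ℤ)+k+2))) := by
    intro h
    have := Int.eq_zero_of_abs_lt_dvd h (by rw [abs_lt]; omega)
    omega
  rw [if_neg h2]
  by_cases hdk : d = k
  · subst hdk
    rw [if_pos (h1.mpr rfl), if_pos rfl]
    field_simp
    ring
  · rw [if_neg (fun h => hdk (h1.mp h)), if_neg (fun h => hdk h.symm)]
    simp



lemma cosint (c : ℤ) (hc : c ≠ 0) : ∫ θ in (0:ℝ)..π, Real.cos (c * θ) = 0 := by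
  have hc' : (c:ℝ) ≠ 0 := Int.cast_ne_zero.mpr hc
  have := intervalIntegral.integral_comp_mul_left (fun x => Real.cos x) hc' (a := 0) (b := π)
  simp only [mul_zero] at this
  rw [this, integral_cos]
  rw [Real.sin_int_mul_pi c, Real.sin_zero]
  simp

lemma sinint (a b : ℕ) (ha : 1 ≤ a) (hb : 1 ≤ b) :
    ∫ θ in (0:ℝ)..π, Real.sin (a * θ) * Real.sin (b * θ)
      = if a = b then π / 2 else 0 := by
  have hint : ∀ (c : ℝ), IntervalIntegrable (fun θ : ℝ => Real.cos (c * θ))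
      volume 0 π := fun c => (Real.continuous_cos.comp (continuous_const.mul continuous_id)).intervalIntegrable _ _
  have heq : ∀ θ : ℝ, Real.sin (a * θ) * Real.sin (b * θ)
      = (Real.cos ((((a:ℤ) - b : ℤ)) * θ) - Real.cos ((((a:ℤ) + b : ℤ)) * θ)) / 2 := by
    intro θ
    have h1 : ((((a:ℤ) - b : ℤ)):ℝ) * θ = a*θ - b*θ := by push_cast; ring
    have h2 : ((((a:ℤ) + b : ℤ)):ℝ) * θ = a*θ + b*θ := by push_cast; ring
    rw [h1, h2, Real.cos_sub, Real.cos_add]; ring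
  rw [intervalIntegral.integral_congr (fun θ _ => heq θ)]
  have hsplit : ∫ θ in (0:ℝ)..π,
      (Real.cos ((((a:ℤ) - b : ℤ)) * θ) - Real.cos ((((a:ℤ) + b : ℤ)) * θ)) / 2
      = ((∫ θ in (0:ℝ)..π, Real.cos ((((a:ℤ) - b : ℤ)) * θ))
        - ∫ θ in (0:ℝ)..π, Real.cos ((((a:ℤ) + b : ℤ)) * θ)) / 2 := by
    rw [intervalIntegral.integral_div, intervalIntegral.integral_sub (by exact_mod_cast hint _) (by exact_mod_cast hint _)]
  rw [hsplit, cosint ((a:ℤ) + b) (by omega)]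
  by_cases hab : a = b
  · subst hab
    simp only [sub_self, Int.cast_zero, zero_mul, Real.cos_zero, if_pos rfl]
    rw [intervalIntegral.integral_const]
    simp
  · rw [cosint ((a:ℤ) - b) (by omega), if_neg hab]
    simp

lemma orthoU (d k : ℕ) :
    ∫ x in (-1:ℝ)..1, Real.sqrt (1 - x ^ 2) *
      ((Polynomial.Chebyshev.U ℝ d).eval x * (Polynomial.Chebyshev.U ℝ k).eval x)
    = if d = k then π / 2 else 0 := by
  set g : ℝ → ℝ := fun x => Real.sqrt (1 - x ^ 2) *
      ((Polynomial.Chebyshev.U ℝ d).eval x * (Polynomial.Chebyshev.U ℝ k).eval x) with hg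
  have hgc : Continuous g := by
    apply Continuous.mul
    · exact Real.continuous_sqrt.comp (by continuity)
    · exact ((Polynomial.Chebyshev.U ℝ d).continuous).mul
        ((Polynomial.Chebyshev.U ℝ k).continuous)
  have hderiv : ∀ θ ∈ Set.uIcc (0:ℝ) π, HasDerivAt Real.cos (-Real.sin θ) θ :=
    fun θ _ => Real.hasDerivAt_cos θ
  have hsub := intervalIntegral.integral_comp_smul_deriv hderiv
    (Real.continuous_sin.neg.continuousOn) hgc
  rw [Real.cos_zero, Real.cos_pi] at hsub
  have hkey : ∀ θ ∈ Set.uIcc (0:ℝ) π,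
      ((fun θ => -Real.sin θ) θ) • ((g ∘ Real.cos) θ)
        = -(Real.sin ((d+1 : ℕ) * θ) * Real.sin ((k+1 : ℕ) * θ)) := by
    intro θ hθ
    rw [Set.uIcc_of_le Real.pi_pos.le] at hθ
    have hsin : 0 ≤ Real.sin θ := Real.sin_nonneg_of_nonneg_of_le_pi hθ.1 hθ.2
    have hsq : 1 - Real.cos θ ^ 2 = Real.sin θ ^ 2 := by
      have := Real.sin_sq_add_cos_sq θ; linarith
    have hUd := Polynomial.Chebyshev.U_real_cos θ d
    have hUk := Polynomial.Chebyshev.U_real_cos θ k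
    push_cast at hUd hUk ⊢
    simp only [Function.comp, hg, smul_eq_mul]
    rw [hsq, Real.sqrt_sq hsin]
    have hprod : ((Polynomial.Chebyshev.U ℝ d).eval (Real.cos θ) * Real.sin θ) *
        ((Polynomial.Chebyshev.U ℝ k).eval (Real.cos θ) * Real.sin θ)
        = Real.sin (((d:ℝ)+1) * θ) * Real.sin (((k:ℝ)+1) * θ) := by
      rw [hUd, hUk]
    linear_combination -hprod
  rw [intervalIntegral.integral_congr hkey, intervalIntegral.integral_neg] at hsub
  have hflip : ∫ x in (1:ℝ)..(-1:ℝ), g x = -∫ x in (-1:ℝ)..1, g x :=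
    intervalIntegral.integral_symm (-1) 1
  rw [hflip] at hsub
  have h2 : ∫ x in (-1:ℝ)..1, g x = ∫ θ in (0:ℝ)..π,
      Real.sin ((d+1 : ℕ) * θ) * Real.sin ((k+1 : ℕ) * θ) := by linarith [hsub]
  rw [h2, sinint (d+1) (k+1) (by omega) (by omega)]
  simp only [Nat.add_right_cancel_iff]


lemma chebCoeffU_cheb (d k : ℕ) :
    chebCoeffU (fun z => (Polynomial.Chebyshev.U ℂ d).eval z) k
      = if k = d then 1 else 0 := by
  have heval : ∀ x : ℝ, (Polynomial.Chebyshev.U ℂ d).eval (x:ℂ)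
      = (((Polynomial.Chebyshev.U ℝ d).eval x : ℝ) : ℂ) := by
    intro x
    have hx : ((x:ℂ)) = algebraMap ℝ ℂ x := rfl
    rw [← Polynomial.Chebyshev.map_U (algebraMap ℝ ℂ) (d:ℤ), hx, Polynomial.eval_map,
      Polynomial.eval₂_at_apply]
    rfl
  rw [chebCoeffU]
  have hinteq : ∀ x : ℝ, (Polynomial.Chebyshev.U ℂ d).eval (x:ℂ) *
      ((Real.sqrt (1 - x ^ 2) * (Polynomial.Chebyshev.U ℝ k).eval x : ℝ) : ℂ)
      = ((Real.sqrt (1 - x ^ 2) * ((Polynomial.Chebyshev.U ℝ d).eval x *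
          (Polynomial.Chebyshev.U ℝ k).eval x) : ℝ) : ℂ) := by
    intro x
    rw [heval x]
    push_cast
    ring
  rw [intervalIntegral.integral_congr (fun x _ => hinteq x)]
  rw [intervalIntegral.integral_ofReal, orthoU d k]
  have hπ : (π : ℂ) ≠ 0 := by exact_mod_cast Real.pi_ne_zero
  by_cases h : d = k
  · subst h; rw [if_pos rfl, if_pos rfl]
    push_cast
    field_simp
  · rw [if_neg h, if_neg (fun hh => h hh.symm)]
    simp



lemma U_natDegree_le (e : ℕ) : (Polynomial.Chebyshev.U ℂ (e:ℤ)).natDegree ≤ e := by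
  induction e using Nat.twoStepInduction with
  | zero => simp [Polynomial.Chebyshev.U_zero]
  | one =>
    rw [show ((1:ℕ):ℤ) = 1 by norm_num, Polynomial.Chebyshev.U_one]
    apply le_trans (Polynomial.natDegree_mul_le)
    simpa using Polynomial.natDegree_X_le
  | more e ih1 ih2 =>
    rw [show ((e+2:ℕ):ℤ) = (e:ℤ) + 2 by push_cast; ring, Polynomial.Chebyshev.U_add_two]
    apply le_trans (Polynomial.natDegree_sub_le _ _)
    rw [max_le_iff]
    constructor
    · apply le_trans (Polynomial.natDegree_mul_le)
      have h1 : ((2:ℂ[X]) * Polynomial.X).natDegree ≤ 1 := by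
        apply le_trans (Polynomial.natDegree_mul_le)
        simpa using Polynomial.natDegree_X_le
      have h2 : (Polynomial.Chebyshev.U ℂ ((e:ℤ)+1)).natDegree ≤ e + 1 := by
        rw [show (e:ℤ)+1 = ((e+1:ℕ):ℤ) by push_cast; ring]; exact ih2
      omega
    · omega

lemma U_coeff (e : ℕ) : (Polynomial.Chebyshev.U ℂ (e:ℤ)).coeff e = 2 ^ e := by
  induction e using Nat.twoStepInduction with
  | zero => simp [Polynomial.Chebyshev.U_zero]
  | one =>
    rw [show ((1:ℕ):ℤ) = 1 by norm_num, Polynomial.Chebyshev.U_one]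
    have : (2:ℂ[X]) * Polynomial.X = Polynomial.X + Polynomial.X := by ring
    rw [this, Polynomial.coeff_add, Polynomial.coeff_X_one]
    norm_num
  | more e ih1 ih2 =>
    rw [show ((e+2:ℕ):ℤ) = (e:ℤ) + 2 by push_cast; ring, Polynomial.Chebyshev.U_add_two]
    have hsplit : (2:ℂ[X]) * Polynomial.X * Polynomial.Chebyshev.U ℂ ((e:ℤ)+1)
        = Polynomial.X * Polynomial.Chebyshev.U ℂ ((e:ℤ)+1)
          + Polynomial.X * Polynomial.Chebyshev.U ℂ ((e:ℤ)+1) := by ring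
    rw [Polynomial.coeff_sub, hsplit, Polynomial.coeff_add]
    have hXc : (Polynomial.X * Polynomial.Chebyshev.U ℂ ((e:ℤ)+1)).coeff (e+2)
        = (Polynomial.Chebyshev.U ℂ ((e:ℤ)+1)).coeff (e+1) := by
      rw [show e+2 = (e+1)+1 by ring, Polynomial.coeff_X_mul]
    have hc1 : ((e:ℤ)+1) = ((e+1:ℕ):ℤ) := by push_cast; ring
    have hlow : (Polynomial.Chebyshev.U ℂ (e:ℤ)).coeff (e+2) = 0 :=
      Polynomial.coeff_eq_zero_of_natDegree_lt (by have := U_natDegree_le e; omega)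
    rw [hXc, hc1, ih2, hlow]
    ring

lemma mem_span_U (n : ℕ) (p : Polynomial ℂ) (h : p.natDegree ≤ n) :
    p ∈ Submodule.span ℂ ((fun d : ℕ => Polynomial.Chebyshev.U ℂ (d:ℤ)) '' Set.Iic n) := by
  set V := Submodule.span ℂ ((fun d : ℕ => Polynomial.Chebyshev.U ℂ (d:ℤ)) '' Set.Iic n) with hV
  have main : ∀ N : ℕ, N ≤ n → ∀ q : Polynomial ℂ, q.natDegree ≤ N → q ∈ V := by
    intro N
    induction N with
    | zero =>
      intro _ q hq
      have hqC : q = Polynomial.C (q.coeff 0) := Polynomial.eq_C_of_natDegree_le_zero hq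
      have hU0 : Polynomial.C (q.coeff 0) = q.coeff 0 • Polynomial.Chebyshev.U ℂ ((0:ℕ):ℤ) := by
        rw [show ((0:ℕ):ℤ) = 0 by norm_num, Polynomial.Chebyshev.U_zero, smul_eq_C_mul, mul_one]
      rw [hqC, hU0]
      exact Submodule.smul_mem _ _ (Submodule.subset_span ⟨0, by simp⟩)
    | succ N ih =>
      intro hN q hq
      set c : ℂ := q.coeff (N+1) / 2 ^ (N+1) with hc
      set r : Polynomial ℂ := q - c • Polynomial.Chebyshev.U ℂ ((N+1:ℕ):ℤ) with hr
      have hrdeg : r.natDegree ≤ N := by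
        rw [Polynomial.natDegree_le_iff_coeff_eq_zero]
        intro b hb
        rw [hr, Polynomial.coeff_sub, Polynomial.coeff_smul]
        rcases (Nat.succ_le_of_lt hb).eq_or_lt with hbe | hbl
        · rw [← hbe, U_coeff (N+1), hc]
          have : (2:ℂ)^(N+1) ≠ 0 := pow_ne_zero _ two_ne_zero
          rw [smul_eq_mul, div_mul_cancel₀ _ this, sub_self]
        · have h1 : q.coeff b = 0 := Polynomial.coeff_eq_zero_of_natDegree_lt (by omega)
          have h2 : (Polynomial.Chebyshev.U ℂ ((N+1:ℕ):ℤ)).coeff b = 0 :=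
            Polynomial.coeff_eq_zero_of_natDegree_lt (by have := U_natDegree_le (N+1); omega)
          rw [h1, h2]; simp
      have hqr : q = r + c • Polynomial.Chebyshev.U ℂ ((N+1:ℕ):ℤ) := by rw [hr]; ring
      rw [hqr]
      exact Submodule.add_mem _ (ih (by omega) r hrdeg)
        (Submodule.smul_mem _ _ (Submodule.subset_span ⟨N+1, by simp [hN], rfl⟩))
  exact main n le_rfl p h


end TrapAux

section TrapLin
open Polynomial

lemma trap_integrable (q : Polynomial ℂ) (k : ℕ) :
    IntervalIntegrable (fun x : ℝ => q.eval (x:ℂ) *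
      ((Real.sqrt (1 - x ^ 2) * (Polynomial.Chebyshev.U ℝ k).eval x : ℝ) : ℂ))
      MeasureTheory.volume (-1 : ℝ) 1 := by
  apply Continuous.intervalIntegrable
  apply Continuous.mul
  · exact q.continuous.comp Complex.continuous_ofReal
  · apply Complex.continuous_ofReal.comp
    exact (Real.continuous_sqrt.comp (by continuity)).mul (Polynomial.continuous _)

lemma trapU_poly_add (q r : Polynomial ℂ) (ρ : ℝ) (k m : ℕ) :
    trapU (fun z => (q + r).eval z) ρ k m
      = trapU (fun z => q.eval z) ρ k m + trapU (fun z => r.eval z) ρ k m := by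
  simp only [trapU, Polynomial.eval_add]
  rw [← mul_add, ← Finset.sum_add_distrib]
  congr 1
  apply Finset.sum_congr rfl
  intros; ring

lemma trapU_poly_smul (c : ℂ) (q : Polynomial ℂ) (ρ : ℝ) (k m : ℕ) :
    trapU (fun z => (c • q).eval z) ρ k m = c * trapU (fun z => q.eval z) ρ k m := by
  simp only [trapU, Polynomial.smul_eq_C_mul, Polynomial.eval_mul, Polynomial.eval_C,
    Finset.mul_sum]
  apply Finset.sum_congr rfl
  intros; ring

lemma chebCoeffU_poly_add (q r : Polynomial ℂ) (k : ℕ) :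
    chebCoeffU (fun z => (q + r).eval z) k
      = chebCoeffU (fun z => q.eval z) k + chebCoeffU (fun z => r.eval z) k := by
  simp only [chebCoeffU, Polynomial.eval_add]
  rw [← mul_add, ← intervalIntegral.integral_add (trap_integrable q k) (trap_integrable r k)]
  congr 1
  apply intervalIntegral.integral_congr
  intro x _
  ring

lemma chebCoeffU_poly_smul (c : ℂ) (q : Polynomial ℂ) (k : ℕ) :
    chebCoeffU (fun z => (c • q).eval z) k = c * chebCoeffU (fun z => q.eval z) k := by
  simp only [chebCoeffU, Polynomial.smul_eq_C_mul, Polynomial.eval_mul, Polynomial.eval_C,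
    mul_assoc]
  rw [intervalIntegral.integral_const_mul]
  ring

end TrapLin

/-- the trapezoidal rule computes the Chebyshev coefficients of the
second kind of a polynomial of degree n exactly, provided m ≥ k + n + 3; in
particular all of them for 0 ≤ k ≤ n are exact once m ≥ 2n + 3. -/
theorem trapezoidal_exact_for_polynomials_second_kind
    (ρ : ℝ) (hρ : 1 < ρ) (n : ℕ) (p : Polynomial ℂ) (hp : p.natDegree = n) :
    (∀ k m : ℕ, m ≥ k + n + 3 →
      trapU (fun z => p.eval z) ρ k m = chebCoeffU (fun z => p.eval z) k) ∧
    (∀ m : ℕ, m ≥ 2 * n + 3 → ∀ k : ℕ, k ≤ n →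
      trapU (fun z => p.eval z) ρ k m = chebCoeffU (fun z => p.eval z) k) := by
  have main : ∀ k m : ℕ, m ≥ k + n + 3 →
      trapU (fun z => p.eval z) ρ k m = chebCoeffU (fun z => p.eval z) k := by
    intro k m hm
    have hsp := mem_span_U n p (le_of_eq hp)
    clear hp
    induction hsp using Submodule.span_induction with
    | mem q hq =>
      obtain ⟨d, hd, rfl⟩ := hq
      simp only [Set.mem_Iic] at hd
      rw [trapU_cheb ρ hρ d k m (by omega), chebCoeffU_cheb d k]
    | zero => simp [trapU, chebCoeffU]
    | add q r _ _ hq hr => rw [trapU_poly_add, chebCoeffU_poly_add, hq, hr]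
    | smul c q _ hq => rw [trapU_poly_smul, chebCoeffU_poly_smul, hq]
  exact ⟨main, fun m hm k hk => main k m (by omega)⟩
end
end

section
/- Let 1 < R ≤ ∞ and let f be analytic in every ellipse E_ρ with 1 ≤ ρ < R (i.e., f is analytic on the open region ∪_{1≤ρ<R} D̄_ρ). Then the function M(ρ) = (1/π) ∫_0^{2π} |f(½(ρe^{iθ} + (ρe^{iθ})^{-1}))| dθ is continuously differentiable on the open interval (1, R). -/
open Complex Real MeasureTheory Polynomial

noncomputable section

/-- The open region ∪_{1 ≤ ρ < R} D̄_ρ swept out by the Bernstein ellipses of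
parameter 1 ≤ ρ < R (where R may be ∞). -/
def ellipseRegion (R : EReal) : Set ℂ :=
  {z | ∃ r θ : ℝ, 1 ≤ r ∧ (r : EReal) < R ∧ z = joukowski r θ}

/-! ### Auxiliary lemmas for `Mfun_contDiff` -/

/-- derivative of `ρ ↦ joukowski ρ θ`. -/
def jouDeriv (ρ θ : ℝ) : ℂ :=
  (Complex.exp (θ * Complex.I) +
    -Complex.exp (θ * Complex.I) / ((ρ:ℂ) * Complex.exp (θ * Complex.I)) ^ 2) / 2

lemma u_ne {ρ : ℝ} (hρ : ρ ≠ 0) (θ : ℝ) : ((ρ:ℂ) * Complex.exp (θ * Complex.I)) ≠ 0 :=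
  mul_ne_zero (by exact_mod_cast hρ) (Complex.exp_ne_zero _)

lemma hasDerivAt_f_joukowski {f : ℂ → ℂ} {ρ : ℝ} (hρ : ρ ≠ 0) (θ : ℝ)
    (hfa : AnalyticAt ℂ f (joukowski ρ θ)) :
    HasDerivAt (fun r : ℝ => f (joukowski r θ)) (deriv f (joukowski ρ θ) * jouDeriv ρ θ) ρ := by
  set c := Complex.exp (θ * Complex.I) with hc
  have h1 : HasDerivAt (fun z : ℂ => z * c) c (ρ:ℂ) := hasDerivAt_mul_const c
  have hne : ((ρ:ℂ) * c) ≠ 0 := u_ne hρ θ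
  have h2 : HasDerivAt (fun z : ℂ => (z * c)⁻¹) (-c / ((ρ:ℂ) * c) ^ 2) (ρ:ℂ) := h1.inv hne
  have h3 := (h1.add h2).div_const 2
  have h4 : HasDerivAt f (deriv f (joukowski ρ θ)) (joukowski ρ θ) :=
    hfa.differentiableAt.hasDerivAt
  have h5 := (h4.comp (ρ:ℂ) h3).comp_ofReal
  exact h5

/-- the integrand of the derivative of `Mfun` -/
def phiM (f : ℂ → ℂ) (ρ θ : ℝ) : ℝ :=
  ((starRingEnd ℂ) (f (joukowski ρ θ)) * (deriv f (joukowski ρ θ) * jouDeriv ρ θ)).re /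
    ‖f (joukowski ρ θ)‖

lemma hasDerivAt_cabs {F : ℝ → ℂ} {F' : ℂ} {x : ℝ} (h : HasDerivAt F F' x) (h0 : F x ≠ 0) :
    HasDerivAt (fun t => ‖F t‖)
      (((starRingEnd ℂ) (F x) * F').re / ‖F x‖) x := by
  have hre : HasDerivAt (fun t => (F t).re) F'.re x :=
    (Complex.reCLM.hasFDerivAt.comp_hasDerivAt x h)
  have him : HasDerivAt (fun t => (F t).im) F'.im x :=
    (Complex.imCLM.hasFDerivAt.comp_hasDerivAt x h)
  have hN : HasDerivAt (fun t => (F t).re * (F t).re + (F t).im * (F t).im)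
      (F'.re * (F x).re + (F x).re * F'.re + (F'.im * (F x).im + (F x).im * F'.im)) x :=
    (hre.mul hre).add (him.mul him)
  have hNx : (F x).re * (F x).re + (F x).im * (F x).im ≠ 0 := by
    simpa [Complex.normSq_apply] using (Complex.normSq_pos.2 h0).ne'
  have h6 := hN.sqrt hNx
  have habs : ∀ z : ℂ, ‖z‖ = Real.sqrt (z.re * z.re + z.im * z.im) := by
    intro z; rw [Complex.norm_def, Complex.normSq_apply]
  have h7 : HasDerivAt (fun t => ‖F t‖)
      ((F'.re * (F x).re + (F x).re * F'.re + (F'.im * (F x).im + (F x).im * F'.im)) /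
        (2 * Real.sqrt ((F x).re * (F x).re + (F x).im * (F x).im))) x := by
    simpa [habs] using h6
  convert h7 using 1
  rw [← habs]
  have hcr : ((starRingEnd ℂ) (F x) * F').re = (F x).re * F'.re + (F x).im * F'.im := by
    simp [Complex.mul_re]
  rw [hcr]
  have habs0 : ‖F x‖ ≠ 0 := norm_ne_zero_iff.mpr h0
  field_simp
  ring

lemma hasDerivAt_abs_f {f : ℂ → ℂ} {ρ θ : ℝ} (hρ : ρ ≠ 0)
    (hfa : AnalyticAt ℂ f (joukowski ρ θ)) (h0 : f (joukowski ρ θ) ≠ 0) :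
    HasDerivAt (fun r : ℝ => ‖f (joukowski r θ)‖) (phiM f ρ θ) ρ :=
  hasDerivAt_cabs (hasDerivAt_f_joukowski hρ θ hfa) h0

lemma abs_phiM_le (f : ℂ → ℂ) (ρ θ : ℝ) :
    |phiM f ρ θ| ≤ ‖deriv f (joukowski ρ θ)‖ * ‖jouDeriv ρ θ‖ := by
  by_cases h0 : f (joukowski ρ θ) = 0
  · simp [phiM, h0]
    positivity
  · have hw : ‖f (joukowski ρ θ)‖ ≠ 0 := norm_ne_zero_iff.mpr h0
    rw [phiM, abs_div, _root_.abs_of_nonneg (norm_nonneg _)]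
    rw [div_le_iff₀ (lt_of_le_of_ne (norm_nonneg _) (Ne.symm hw))]
    calc |((starRingEnd ℂ) (f (joukowski ρ θ)) * (deriv f (joukowski ρ θ) * jouDeriv ρ θ)).re|
        ≤ ‖(starRingEnd ℂ) (f (joukowski ρ θ)) *
            (deriv f (joukowski ρ θ) * jouDeriv ρ θ)‖ := Complex.abs_re_le_norm _
      _ = ‖deriv f (joukowski ρ θ)‖ * ‖jouDeriv ρ θ‖ *
            ‖f (joukowski ρ θ)‖ := by
          simp [map_mul]; ring

lemma jou_inj {r r' θ θ' : ℝ} (hr : 1 < r) (hr' : 1 < r')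
    (h : joukowski r θ = joukowski r' θ') :
    Complex.exp (θ * Complex.I) = Complex.exp (θ' * Complex.I) := by
  set u := (r:ℂ) * Complex.exp (θ * Complex.I) with hu
  set v := (r':ℂ) * Complex.exp (θ' * Complex.I) with hv
  have hau : ‖u‖ = r := by
    rw [hu, norm_mul, Complex.norm_real, Real.norm_eq_abs, Complex.norm_exp_ofReal_mul_I,
      mul_one, abs_of_pos (by linarith)]
  have hav : ‖v‖ = r' := by
    rw [hv, norm_mul, Complex.norm_real, Real.norm_eq_abs, Complex.norm_exp_ofReal_mul_I,
      mul_one, abs_of_pos (by linarith)]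
  have hun : u ≠ 0 := by
    intro h0; rw [h0] at hau; simp at hau; linarith
  have hvn : v ≠ 0 := by
    intro h0; rw [h0] at hav; simp at hav; linarith
  have h2 : u + u⁻¹ = v + v⁻¹ := by
    have h := h
    rw [joukowski, joukowski, ← hu, ← hv, div_eq_div_iff (by norm_num) (by norm_num)] at h
    have h2 : (u + u⁻¹) * 2 = (v + v⁻¹) * 2 := h
    exact mul_right_cancel₀ (by norm_num) h2
  have h3 : (u - v) * (1 - (u * v)⁻¹) = 0 := by
    have he : (u - v) * (1 - (u * v)⁻¹) = (u + u⁻¹) - (v + v⁻¹) := by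
      field_simp
      ring
    rw [he, h2, sub_self]
  have huv : u = v := by
    rcases mul_eq_zero.1 h3 with h4 | h4
    · exact sub_eq_zero.1 h4
    · exfalso
      have h5 : (u * v)⁻¹ = 1 := by linear_combination -h4
      have h6 : u * v = 1 := by
        have h7 := congrArg (·⁻¹) h5; simpa using h7
      have h8 : ‖u * v‖ = 1 := by rw [h6]; simp
      rw [norm_mul, hau, hav] at h8
      nlinarith
  have hrr : r = r' := by rw [← hau, ← hav, huv]
  rw [hu, hv, hrr] at huv
  exact mul_left_cancel₀ (by exact_mod_cast (by linarith : r' ≠ 0)) huv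

lemma countable_exp_fiber (c : ℂ) : {θ : ℝ | Complex.exp (θ * Complex.I) = c}.Countable := by
  rcases Set.eq_empty_or_nonempty {θ : ℝ | Complex.exp (θ * Complex.I) = c} with h | ⟨θ₀, hθ₀⟩
  · rw [h]; exact Set.countable_empty
  · have hsub : {θ : ℝ | Complex.exp (θ * Complex.I) = c} ⊆
        Set.range (fun n : ℤ => θ₀ + n * (2 * Real.pi)) := by
      intro θ hθ
      have h1 : Complex.exp (θ * Complex.I) = Complex.exp (θ₀ * Complex.I) := by
        rw [hθ, hθ₀]
      rw [Complex.exp_eq_exp_iff_exists_int] at h1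
      obtain ⟨n, hn⟩ := h1
      refine ⟨n, ?_⟩
      have h2 : (θ : ℂ) = θ₀ + n * (2 * Real.pi) := by
        have hI : (Complex.I : ℂ) ≠ 0 := Complex.I_ne_zero
        have h3 : (θ : ℂ) * Complex.I = ((θ₀ : ℂ) + n * (2 * Real.pi)) * Complex.I := by
          rw [hn]; ring
        exact mul_right_cancel₀ hI h3
      have h3 : (θ : ℂ) = ((θ₀ + n * (2 * Real.pi) : ℝ) : ℂ) := by
        rw [h2]; push_cast; ring
      exact_mod_cast (Complex.ofReal_inj.1 h3).symm
    exact (Set.countable_range _).mono hsub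

lemma joinedIn_of_continuousOn {s : Set ℂ} {g : ℝ → ℂ} (hg : ContinuousOn g (Set.Icc 0 1))
    (hmem : ∀ t ∈ Set.Icc (0:ℝ) 1, g t ∈ s) : JoinedIn s (g 0) (g 1) := by
  refine ⟨⟨⟨fun t => g t, ?_⟩, by simp, by simp⟩, fun t => hmem _ ?_⟩
  · exact hg.comp_continuous continuous_subtype_val (fun x => x.2)
  · exact t.2

lemma continuousOn_jou_r (θ : ℝ) :
    ContinuousOn (fun r : ℝ => joukowski r θ) {r : ℝ | r ≠ 0} := by
  intro r hr
  have hu : ContinuousAt (fun r : ℝ => (r:ℂ) * Complex.exp (θ * Complex.I)) r :=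
    (Complex.continuous_ofReal.mul continuous_const).continuousAt
  exact ((hu.add (hu.inv₀ (u_ne hr θ))).div_const 2).continuousWithinAt

lemma continuous_jou_theta {r : ℝ} (hr : r ≠ 0) :
    Continuous (fun θ : ℝ => joukowski r θ) := by
  have hu : Continuous (fun θ : ℝ => (r:ℂ) * Complex.exp (θ * Complex.I)) :=
    continuous_const.mul (Complex.continuous_exp.comp
      (Complex.continuous_ofReal.mul continuous_const))
  exact (hu.add (hu.inv₀ (fun θ => u_ne hr θ))).div_const 2

lemma continuousAt_jou_pair {p : ℝ × ℝ} (hp : p.1 ≠ 0) :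
    ContinuousAt (fun q : ℝ × ℝ => joukowski q.1 q.2) p := by
  have hu : Continuous (fun q : ℝ × ℝ => (q.1:ℂ) * Complex.exp (q.2 * Complex.I)) :=
    (Complex.continuous_ofReal.comp continuous_fst).mul
      (Complex.continuous_exp.comp
        ((Complex.continuous_ofReal.comp continuous_snd).mul continuous_const))
  exact ((hu.continuousAt.add (hu.continuousAt.inv₀ (u_ne hp p.2))).div_const 2)

lemma continuousAt_jouDeriv_pair {p : ℝ × ℝ} (hp : p.1 ≠ 0) :
    ContinuousAt (fun q : ℝ × ℝ => jouDeriv q.1 q.2) p := by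
  have hc : Continuous (fun q : ℝ × ℝ => Complex.exp (q.2 * Complex.I)) :=
    Complex.continuous_exp.comp
      ((Complex.continuous_ofReal.comp continuous_snd).mul continuous_const)
  have hu : Continuous (fun q : ℝ × ℝ => ((q.1:ℂ) * Complex.exp (q.2 * Complex.I)) ^ 2) :=
    ((Complex.continuous_ofReal.comp continuous_fst).mul hc).pow 2
  have hne : (((p.1:ℂ)) * Complex.exp (p.2 * Complex.I)) ^ 2 ≠ 0 := pow_ne_zero _ (u_ne hp p.2)
  exact ((hc.continuousAt.add ((hc.neg).continuousAt.div₀ hu.continuousAt hne)).div_const 2)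

lemma jou_mem_region {R : EReal} {r θ : ℝ} (h1 : 1 ≤ r) (h2 : (r : EReal) < R) :
    joukowski r θ ∈ ellipseRegion R := ⟨r, θ, h1, h2, rfl⟩

lemma ellipseRegion_pathConnected {R : EReal} (hR : 1 < R) :
    IsPathConnected (ellipseRegion R) := by
  have h1R : ((1:ℝ) : EReal) < R := by exact_mod_cast hR
  refine ⟨joukowski 1 0, jou_mem_region le_rfl h1R, ?_⟩
  rintro z ⟨r, θ, hr1, hrR, rfl⟩
  have hrne : r ≠ 0 := by linarith
  have p1 : JoinedIn (ellipseRegion R) (joukowski r θ) (joukowski r 0) := by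
    have h := joinedIn_of_continuousOn (s := ellipseRegion R)
      (g := fun t : ℝ => joukowski r ((1 - t) * θ))
      (((continuous_jou_theta hrne).comp (by continuity)).continuousOn)
      (fun t _ => jou_mem_region hr1 hrR)
    simpa using h
  have p2 : JoinedIn (ellipseRegion R) (joukowski r 0) (joukowski 1 0) := by
    have hmem : ∀ t ∈ Set.Icc (0:ℝ) 1, (1 - t) * r + t ∈ {x : ℝ | x ≠ 0} ∧
        1 ≤ (1 - t) * r + t ∧ (((1 - t) * r + t : ℝ) : EReal) < R := by
      intro t ht
      have h1 : 1 ≤ (1 - t) * r + t := by nlinarith [ht.1, ht.2]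
      have h2 : (1 - t) * r + t ≤ r := by nlinarith [ht.1, ht.2]
      refine ⟨by intro h; rw [h] at h1; norm_num at h1, h1, lt_of_le_of_lt ?_ hrR⟩
      exact_mod_cast h2
    have h := joinedIn_of_continuousOn (s := ellipseRegion R)
      (g := fun t : ℝ => joukowski ((1 - t) * r + t) 0)
      ((continuousOn_jou_r 0).comp (by fun_prop) (fun t ht => (hmem t ht).1))
      (fun t ht => jou_mem_region (hmem t ht).2.1 (hmem t ht).2.2)
    simpa using h
  exact ((p1.trans p2).symm)

lemma countable_zeros {f : ℂ → ℂ} {U : Set ℂ}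
    (h : ∀ z ∈ U, f z = 0 → ∀ᶠ w in nhdsWithin z {z}ᶜ, f w ≠ 0) :
    {z | z ∈ U ∧ f z = 0}.Countable := by
  set Z := {z | z ∈ U ∧ f z = 0} with hZ
  have hr : ∀ z ∈ Z, ∃ ε > 0, ∀ w ∈ Metric.ball z ε, w ≠ z → f w ≠ 0 := by
    intro z hz
    have h1 := h z hz.1 hz.2
    rw [Filter.eventually_iff, Metric.mem_nhdsWithin_iff] at h1
    obtain ⟨ε, hε, hball⟩ := h1
    exact ⟨ε, hε, fun w hw hwz => hball ⟨hw, hwz⟩⟩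
  choose! r hr0 hr1 using hr
  have h := Set.PairwiseDisjoint.countable_of_isOpen (a := Z)
    (s := fun z => Metric.ball z (r z / 2)) ?_ (fun z _ => Metric.isOpen_ball)
    (fun z hz => ⟨z, Metric.mem_ball_self (by have := hr0 z hz; linarith)⟩)
  · exact h
  · intro z hz w hw hzw
    rw [Function.onFun, Set.disjoint_left]
    intro x hxz hxw
    rw [Metric.mem_ball] at hxz hxw
    have hd : dist z w < r z / 2 + r w / 2 := by
      calc dist z w ≤ dist z x + dist x w := dist_triangle _ _ _
        _ = dist x z + dist x w := by rw [dist_comm z x]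
        _ < r z / 2 + r w / 2 := by linarith
    rcases le_total (r w) (r z) with hle | hle
    · have hm : w ∈ Metric.ball z (r z) := by rw [Metric.mem_ball, dist_comm]; linarith
      exact hr1 z hz w hm (Ne.symm hzw) hw.2
    · have hm : z ∈ Metric.ball w (r w) := by rw [Metric.mem_ball]; linarith
      exact hr1 w hw z hm hzw hz.2

/-- M(ρ) is continuously differentiable on (1, R). -/
theorem Mfun_contDiff
    (R : EReal) (hR : 1 < R) (f : ℂ → ℂ)
    (hf : ∀ z ∈ ellipseRegion R, AnalyticAt ℂ f z) :
    ContDiffOn ℝ 1 (Mfun f) {ρ : ℝ | 1 < ρ ∧ (ρ : EReal) < R} := by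
  set S := {ρ : ℝ | 1 < ρ ∧ (ρ : EReal) < R} with hSdef
  have hSsub : ∀ ρ ∈ S, ∀ θ : ℝ, joukowski ρ θ ∈ ellipseRegion R := fun ρ hρ θ =>
    jou_mem_region (le_of_lt hρ.1) hρ.2
  have hSopen : IsOpen S := by
    have h1 : S = {ρ : ℝ | 1 < ρ} ∩ ((↑) : ℝ → EReal) ⁻¹' (Set.Iio R) := rfl
    rw [h1]
    exact isOpen_Ioi.inter (isOpen_Iio.preimage continuous_coe_real_ereal)
  by_cases hzero : ∀ z ∈ ellipseRegion R, f z = 0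
  · refine (contDiffOn_const (c := (0:ℝ))).congr fun ρ hρ => ?_
    have h1 : (fun θ : ℝ => ‖f (joukowski ρ θ)‖) = fun _ => (0:ℝ) :=
      funext fun θ => by rw [hzero _ (hSsub ρ hρ θ), norm_zero]
    rw [Mfun, h1]
    simp
  · push_neg at hzero
    obtain ⟨z₀, hz₀U, hz₀⟩ := hzero
    have hreg : AnalyticOnNhd ℂ f (ellipseRegion R) := hf
    have hfd : AnalyticOnNhd ℂ (deriv f) (ellipseRegion R) := hreg.deriv
    have hpre : IsPreconnected (ellipseRegion R) :=
      (ellipseRegion_pathConnected hR).isConnected.isPreconnected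
    have hne : ∀ z ∈ ellipseRegion R, f z = 0 → ∀ᶠ w in nhdsWithin z {z}ᶜ, f w ≠ 0 := by
      intro z hz _
      rcases (hf z hz).eventually_eq_zero_or_eventually_ne_zero with h | h
      · exact absurd (hreg.eqOn_zero_of_preconnected_of_eventuallyEq_zero hpre hz h hz₀U) hz₀
      · exact h
    have hZc : {z | z ∈ ellipseRegion R ∧ f z = 0}.Countable := countable_zeros hne
    intro ρ₀ hρ₀
    obtain ⟨ε, hε, hball⟩ := Metric.isOpen_iff.1 hSopen ρ₀ hρ₀
    set δ := ε / 2 with hδdef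
    have hδ : 0 < δ := by positivity
    have hIcc : Set.Icc (ρ₀ - δ) (ρ₀ + δ) ⊆ S := by
      intro x hx
      apply hball
      rw [Metric.mem_ball, Real.dist_eq]
      have h1 : |x - ρ₀| ≤ δ := abs_le.2 ⟨by linarith [hx.1], by linarith [hx.2]⟩
      linarith
    have hballIcc : Metric.ball ρ₀ δ ⊆ Set.Icc (ρ₀ - δ) (ρ₀ + δ) := by
      rw [Real.ball_eq_Ioo]; exact Set.Ioo_subset_Icc_self
    have hIccS : ∀ x ∈ Set.Icc (ρ₀ - δ) (ρ₀ + δ), 1 < x := fun x hx => (hIcc hx).1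
    have hρ₀S : ρ₀ ∈ Metric.ball ρ₀ δ := Metric.mem_ball_self hδ
    -- the countable bad set of angles
    set Θ := {θ : ℝ | ∃ x ∈ Set.Icc (ρ₀ - δ) (ρ₀ + δ), f (joukowski x θ) = 0} with hΘdef
    have hΘc : Θ.Countable := by
      have hsub : Θ ⊆ ⋃ z ∈ {z | z ∈ ellipseRegion R ∧ f z = 0},
          {θ : ℝ | ∃ x ∈ Set.Icc (ρ₀ - δ) (ρ₀ + δ), joukowski x θ = z} := by
        rintro θ ⟨x, hx, h0⟩
        exact Set.mem_biUnion ⟨hSsub x (hIcc hx) θ, h0⟩ ⟨x, hx, rfl⟩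
      refine Set.Countable.mono hsub (Set.Countable.biUnion hZc fun z hz => ?_)
      rcases Set.eq_empty_or_nonempty
          {θ : ℝ | ∃ x ∈ Set.Icc (ρ₀ - δ) (ρ₀ + δ), joukowski x θ = z} with h | ⟨θ₀, x₀, hx₀, hj₀⟩
      · rw [h]; exact Set.countable_empty
      · refine (countable_exp_fiber (Complex.exp (θ₀ * Complex.I))).mono ?_
        rintro θ ⟨x, hx, hj⟩
        exact jou_inj (hIccS x hx) (hIccS x₀ hx₀) (hj.trans hj₀.symm)
    have hΘnull : ∀ᵐ θ : ℝ, θ ∉ Θ := hΘc.ae_notMem _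
    -- continuity facts
    have hfc : ∀ x ∈ S, Continuous fun θ : ℝ => f (joukowski x θ) := by
      intro x hx
      rw [continuous_iff_continuousAt]
      intro θ
      exact ContinuousAt.comp (x := θ) (f := fun θ : ℝ => joukowski x θ)
        ((hf _ (hSsub x hx θ)).continuousAt)
        (continuous_jou_theta (by have := hx.1; intro h; rw [h] at this; linarith)).continuousAt
    have habsc : ∀ x ∈ S, Continuous fun θ : ℝ => ‖f (joukowski x θ)‖ :=
      fun x hx => continuous_norm.comp (hfc x hx)
    -- the uniform bound
    set B : Set (ℝ × ℝ) := Set.Icc (ρ₀ - δ) (ρ₀ + δ) ×ˢ Set.Icc (0:ℝ) (2 * π) with hBdef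
    have hGc : ContinuousOn (fun p : ℝ × ℝ =>
        ‖deriv f (joukowski p.1 p.2)‖ * ‖jouDeriv p.1 p.2‖) B := by
      intro p hp
      have hp1 : p.1 ≠ 0 := by have := hIccS p.1 hp.1; intro h; rw [h] at this; linarith
      have hmem : joukowski p.1 p.2 ∈ ellipseRegion R := hSsub p.1 (hIcc hp.1) p.2
      have h1 : ContinuousAt (fun q : ℝ × ℝ => deriv f (joukowski q.1 q.2)) p :=
        ContinuousAt.comp (x := p) (f := fun q : ℝ × ℝ => joukowski q.1 q.2)
          ((hfd _ hmem).continuousAt) (continuousAt_jou_pair hp1)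
      exact ((continuous_norm.continuousAt.comp h1).mul
        (continuous_norm.continuousAt.comp
          (continuousAt_jouDeriv_pair hp1))).continuousWithinAt
    obtain ⟨C, hC⟩ := (isCompact_Icc.prod isCompact_Icc).exists_bound_of_continuousOn hGc
    have hC' : ∀ x ∈ Set.Icc (ρ₀ - δ) (ρ₀ + δ), ∀ θ ∈ Set.Icc (0:ℝ) (2 * π),
        |phiM f x θ| ≤ C := by
      intro x hx θ hθ
      refine (abs_phiM_le f x θ).trans ?_
      have h1 := hC (x, θ) ⟨hx, hθ⟩
      rw [Real.norm_eq_abs] at h1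
      exact (le_abs_self _).trans h1
    -- measurability of the derivative integrand
    have hmeas : ∀ x ∈ S, MeasureTheory.AEStronglyMeasurable (fun θ : ℝ => phiM f x θ)
        (MeasureTheory.volume.restrict (Set.uIoc (0:ℝ) (2 * π))) := by
      intro x hx
      have hx0 : x ≠ 0 := by have := hx.1; intro h; rw [h] at this; linarith
      have hdc : Continuous fun θ : ℝ => deriv f (joukowski x θ) := by
        rw [continuous_iff_continuousAt]
        intro θ
        exact ContinuousAt.comp (x := θ) (f := fun θ : ℝ => joukowski x θ)
          ((hfd _ (hSsub x hx θ)).continuousAt) (continuous_jou_theta hx0).continuousAt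
      have hjdc : Continuous fun θ : ℝ => jouDeriv x θ := by
        rw [continuous_iff_continuousAt]
        intro θ
        exact ContinuousAt.comp (x := θ) (f := fun θ : ℝ => ((x, θ) : ℝ × ℝ))
          (continuousAt_jouDeriv_pair (p := (x, θ)) hx0)
          (Continuous.continuousAt (by fun_prop))
      have hnum : Continuous fun θ : ℝ =>
          ((starRingEnd ℂ) (f (joukowski x θ)) * (deriv f (joukowski x θ) * jouDeriv x θ)).re :=
        Complex.continuous_re.comp
          (((Complex.continuous_conj.comp (hfc x hx))).mul (hdc.mul hjdc))
      exact ((hnum.measurable.div (habsc x hx).measurable).aestronglyMeasurable).restrict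
    -- the candidate derivative
    set D : ℝ → ℝ := fun x => ∫ θ in (0:ℝ)..(2 * π), phiM f x θ with hDdef
    have hballS : Metric.ball ρ₀ δ ⊆ S := fun x hx => hIcc (hballIcc hx)
    -- differentiation under the integral sign
    have key : ∀ x₁ ∈ Metric.ball ρ₀ δ,
        HasDerivAt (fun x : ℝ => ∫ θ in (0:ℝ)..(2 * π), ‖f (joukowski x θ)‖)
          (D x₁) x₁ := by
      intro x₁ hx₁
      have hd : dist x₁ ρ₀ < δ := Metric.mem_ball.1 hx₁
      have hε₁ : 0 < δ - dist x₁ ρ₀ := by linarith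
      have hb1 : Metric.ball x₁ (δ - dist x₁ ρ₀) ⊆ Metric.ball ρ₀ δ :=
        Metric.ball_subset_ball' (by linarith)
      have h := intervalIntegral.hasDerivAt_integral_of_dominated_loc_of_deriv_le
        (F := fun (x : ℝ) (θ : ℝ) => ‖f (joukowski x θ)‖)
        (F' := fun (x : ℝ) (θ : ℝ) => phiM f x θ) (x₀ := x₁)
        (a := 0) (b := 2 * π) (μ := MeasureTheory.volume)
        (bound := fun _ => C) (Metric.ball_mem_nhds x₁ hε₁) ?_ ?_ ?_ ?_ ?_ ?_
      · exact h.2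
      · filter_upwards [hSopen.mem_nhds (hballS hx₁)] with x hx
        exact ((habsc x hx).aestronglyMeasurable).restrict
      · exact ((habsc x₁ (hballS hx₁))).intervalIntegrable _ _
      · exact hmeas x₁ (hballS hx₁)
      · refine MeasureTheory.ae_of_all _ fun θ hθ x hx => ?_
        have hθ' : θ ∈ Set.Icc (0:ℝ) (2 * π) := by
          rw [Set.uIoc_of_le (by positivity : (0:ℝ) ≤ 2 * π)] at hθ
          exact ⟨le_of_lt hθ.1, hθ.2⟩
        rw [Real.norm_eq_abs]
        exact hC' x (hballIcc (hb1 hx)) θ hθ'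
      · exact intervalIntegrable_const
      · filter_upwards [hΘnull] with θ hθ _ x hx
        have hxI : x ∈ Set.Icc (ρ₀ - δ) (ρ₀ + δ) := hballIcc (hb1 hx)
        have hx1 : 1 < x := hIccS x hxI
        refine hasDerivAt_abs_f (by linarith) (hf _ (hSsub x (hIcc hxI) θ)) ?_
        intro h0
        exact hθ ⟨x, hxI, h0⟩
    -- continuity of the derivative
    have hDcont : ContinuousOn D (Metric.ball ρ₀ δ) := by
      intro x₁ hx₁
      apply intervalIntegral.tendsto_integral_filter_of_dominated_convergence
        (bound := fun _ => C)
      · filter_upwards [self_mem_nhdsWithin] with x hx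
        exact hmeas x (hballS hx)
      · filter_upwards [self_mem_nhdsWithin] with x hx
        refine MeasureTheory.ae_of_all _ fun θ hθ => ?_
        have hθ' : θ ∈ Set.Icc (0:ℝ) (2 * π) := by
          rw [Set.uIoc_of_le (by positivity : (0:ℝ) ≤ 2 * π)] at hθ
          exact ⟨le_of_lt hθ.1, hθ.2⟩
        rw [Real.norm_eq_abs]
        exact hC' x (hballIcc hx) θ hθ'
      · exact intervalIntegrable_const
      · filter_upwards [hΘnull] with θ hθ _
        have hx₁I : x₁ ∈ Set.Icc (ρ₀ - δ) (ρ₀ + δ) := hballIcc hx₁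
        have hx₁0 : x₁ ≠ 0 := by have := hIccS x₁ hx₁I; intro h; rw [h] at this; linarith
        have hJc : ContinuousAt (fun x : ℝ => joukowski x θ) x₁ :=
          (continuousOn_jou_r θ).continuousAt
            (IsOpen.mem_nhds isOpen_compl_singleton hx₁0)
        have hmem : joukowski x₁ θ ∈ ellipseRegion R := hSsub x₁ (hballS hx₁) θ
        have hnum : ContinuousAt (fun x : ℝ =>
            ((starRingEnd ℂ) (f (joukowski x θ)) *
              (deriv f (joukowski x θ) * jouDeriv x θ)).re) x₁ := by
          refine Complex.continuous_re.continuousAt.comp ?_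
          have hfx : ContinuousAt (fun x : ℝ => f (joukowski x θ)) x₁ :=
            ContinuousAt.comp (x := x₁) (f := fun x : ℝ => joukowski x θ)
              ((hf _ hmem).continuousAt) hJc
          have hdx : ContinuousAt (fun x : ℝ => deriv f (joukowski x θ)) x₁ :=
            ContinuousAt.comp (x := x₁) (f := fun x : ℝ => joukowski x θ)
              ((hfd _ hmem).continuousAt) hJc
          have hjx : ContinuousAt (fun x : ℝ => jouDeriv x θ) x₁ :=
            ContinuousAt.comp (x := x₁) (f := fun x : ℝ => ((x, θ) : ℝ × ℝ))
              (continuousAt_jouDeriv_pair (p := (x₁, θ)) hx₁0)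
              (Continuous.continuousAt (by fun_prop))
          exact (Complex.continuous_conj.continuousAt.comp hfx).mul (hdx.mul hjx)
        have hden : ContinuousAt (fun x : ℝ => ‖f (joukowski x θ)‖) x₁ :=
          continuous_norm.continuousAt.comp
            (ContinuousAt.comp (x := x₁) (f := fun x : ℝ => joukowski x θ)
              ((hf _ hmem).continuousAt) hJc)
        have hden0 : ‖f (joukowski x₁ θ)‖ ≠ 0 := by
          refine norm_ne_zero_iff.mpr fun h0 => hθ ⟨x₁, hx₁I, h0⟩
        exact ((hnum.div hden hden0).continuousWithinAt).tendsto
    -- assemble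
    have hMd : ∀ x ∈ Metric.ball ρ₀ δ, HasDerivAt (Mfun f) ((1 / π) * D x) x := by
      intro x hx
      have h := (key x hx).const_mul (1 / π)
      exact h
    have hcd : ContDiffOn ℝ 1 (Mfun f) (Metric.ball ρ₀ δ) := by
      have hdiff : DifferentiableOn ℝ (Mfun f) (Metric.ball ρ₀ δ) := fun x hx =>
        (hMd x hx).differentiableAt.differentiableWithinAt
      have hderiv : ∀ x ∈ Metric.ball ρ₀ δ, deriv (Mfun f) x = (1 / π) * D x := fun x hx =>
        (hMd x hx).deriv
      have hcont : ContinuousOn (deriv (Mfun f)) (Metric.ball ρ₀ δ) :=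
        (continuousOn_const.mul hDcont).congr hderiv
      have hiff := contDiffOn_succ_iff_deriv_of_isOpen (𝕜 := ℝ) (f := Mfun f) (n := 0)
        (s := Metric.ball ρ₀ δ) Metric.isOpen_ball
      norm_num at hiff
      exact hiff.2 ⟨hdiff, by simpa [contDiffOn_zero] using hcont⟩
    exact (hcd.contDiffAt (Metric.ball_mem_nhds ρ₀ hδ)).contDiffWithinAt
end
end

section
/- Let 1 < R ≤ ∞ and let f be analytic in every ellipse E_ρ with 1 ≤ ρ < R (i.e., f is analytic on the open region ∪_{1≤ρ<R} D̄_ρ). Then the function M(ρ) = (1/π) ∫_0^{2π} |f(½(ρe^{iθ} + (ρe^{iθ})^{-1}))| dθ is monotonically nondecreasing on [1, R): for all 1 ≤ ρ ≤ r < R, M(ρ) ≤ M(r). -/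
open Complex Real MeasureTheory Polynomial

noncomputable section

namespace MfunAux

/-- The Joukowski map as a function of one complex variable. -/
def Jf (w : ℂ) : ℂ := (w + w⁻¹) / 2

lemma Jf_inv (w : ℂ) : Jf w⁻¹ = Jf w := by
  unfold Jf; rw [inv_inv, add_comm]

lemma jouk (t θ : ℝ) :
    joukowski t θ = Jf ((t : ℂ) * Complex.exp ((θ : ℂ) * Complex.I)) := rfl

/-- The conjugate "sign" of a complex number. -/
def csgn (z : ℂ) : ℂ := if z = 0 then 1 else (starRingEnd ℂ) z / (‖z‖ : ℂ)

lemma norm_csgn_le (z : ℂ) : ‖csgn z‖ ≤ 1 := by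
  unfold csgn
  split
  · simp
  · rename_i hz
    have habs : ‖z‖ ≠ 0 := norm_ne_zero_iff.mpr hz
    rw [norm_div, Complex.norm_conj,
      Complex.norm_real, Real.norm_eq_abs, _root_.abs_of_nonneg (norm_nonneg z), div_self habs]

lemma mul_csgn (z : ℂ) : z * csgn z = (‖z‖ : ℂ) := by
  unfold csgn
  split
  · rename_i hz; simp [hz]
  · rename_i hz
    have habs : (‖z‖ : ℂ) ≠ 0 := by
      simpa using hz
    rw [mul_div_assoc', div_eq_iff habs, Complex.mul_conj, Complex.normSq_eq_norm_sq]
    push_cast; ring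

lemma measurable_csgn : Measurable csgn := by
  unfold csgn
  refine Measurable.ite ?_ measurable_const ?_
  · simpa using (MeasurableSet.singleton (0 : ℂ))
  · exact (Complex.continuous_conj.measurable).div
      ((Complex.continuous_ofReal.comp continuous_norm).measurable)

end MfunAux

open MfunAux in
/-- M(ρ) is monotonically nondecreasing on [1, R). -/
theorem Mfun_monotone
    (R : EReal) (hR : 1 < R) (f : ℂ → ℂ)
    (hf : ∀ z ∈ ellipseRegion R, AnalyticAt ℂ f z) :
    ∀ ρ r : ℝ, 1 ≤ ρ → ρ ≤ r → (r : EReal) < R → Mfun f ρ ≤ Mfun f r := by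
  intro ρ r hρ hρr hrR
  rcases eq_or_lt_of_le hρr with rfl | hlt
  · exact le_rfl
  have hρ0 : (0 : ℝ) < ρ := lt_of_lt_of_le one_pos hρ
  have hr1 : 1 < r := lt_of_le_of_lt hρ hlt
  have hr0 : (0 : ℝ) < r := lt_trans one_pos hr1
  obtain ⟨r', hrr'E, hr'R⟩ := EReal.exists_between_coe_real hrR
  have hrr' : r < r' := by exact_mod_cast hrr'E
  have hr'1 : 1 < r' := hr1.trans hrr'
  have hr'0 : (0 : ℝ) < r' := lt_trans one_pos hr'1
  -- membership of Joukowski images in the ellipse region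
  have hmem : ∀ w : ℂ, r'⁻¹ < ‖w‖ → ‖w‖ < r' →
      Jf w ∈ ellipseRegion R := by
    intro w h1 h2
    have ht0 : 0 < ‖w‖ := lt_trans (inv_pos.2 hr'0) h1
    have hw0 : w ≠ 0 := by
      intro h; rw [h] at ht0; simp at ht0
    rcases le_or_gt 1 (‖w‖) with h1t | h1t
    · refine ⟨‖w‖, Complex.arg w, h1t, ?_, ?_⟩
      · exact lt_trans (by exact_mod_cast h2) hr'R
      · rw [jouk, Complex.norm_mul_exp_arg_mul_I]
    · refine ⟨(‖w‖)⁻¹, -(Complex.arg w), ?_, ?_, ?_⟩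
      · rw [le_inv_comm₀ one_pos ht0]; simpa using h1t.le
      · have : (‖w‖)⁻¹ < r' := by
          rw [inv_lt_comm₀ ht0 hr'0]; exact h1
        exact lt_trans (by exact_mod_cast this) hr'R
      · rw [jouk]
        have hkey : (((‖w‖)⁻¹ : ℝ) : ℂ) *
            Complex.exp (((-(Complex.arg w) : ℝ) : ℂ) * Complex.I) = w⁻¹ := by
          conv_rhs => rw [← Complex.norm_mul_exp_arg_mul_I w]
          rw [mul_inv, ← Complex.exp_neg]
          push_cast
          ring_nf
        rw [hkey, Jf_inv]
  have hAn : ∀ w : ℂ, r'⁻¹ < ‖w‖ → ‖w‖ < r' →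
      AnalyticAt ℂ f (Jf w) := fun w h1 h2 => hf _ (hmem w h1 h2)
  -- |ζ e^{iθ}| = |ζ|
  have habs : ∀ (ζ : ℂ) (θ : ℝ),
      ‖ζ * Complex.exp ((θ : ℂ) * Complex.I)‖ = ‖ζ‖ := by
    intro ζ θ
    rw [norm_mul, Complex.norm_exp_ofReal_mul_I, mul_one]
  have hJcont : ∀ {w : ℂ}, w ≠ 0 → ContinuousAt Jf w := by
    intro w hw
    exact ((continuousAt_id.add (continuousAt_inv₀ hw)).div_const 2)
  have hEcont : ∀ ζ : ℂ, Continuous (fun θ : ℝ => ζ * Complex.exp ((θ : ℂ) * Complex.I)) :=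
    fun ζ => continuous_const.mul
      (Complex.continuous_exp.comp (Complex.continuous_ofReal.mul continuous_const))
  have hcontθ : ∀ ζ : ℂ, r'⁻¹ < ‖ζ‖ → ‖ζ‖ < r' →
      Continuous fun θ : ℝ => f (Jf (ζ * Complex.exp ((θ : ℂ) * Complex.I))) := by
    intro ζ h1 h2
    rw [continuous_iff_continuousAt]
    intro θ
    have h1' : r'⁻¹ < ‖ζ * Complex.exp ((θ : ℂ) * Complex.I)‖ := by
      rw [habs]; exact h1
    have h2' : ‖ζ * Complex.exp ((θ : ℂ) * Complex.I)‖ < r' := by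
      rw [habs]; exact h2
    have hw0 : ζ * Complex.exp ((θ : ℂ) * Complex.I) ≠ 0 := by
      intro h
      rw [h, norm_zero] at h1'
      exact absurd h1' (not_lt.2 (inv_pos.2 hr'0).le)
    have hinner : ContinuousAt
        (fun θ : ℝ => Jf (ζ * Complex.exp ((θ : ℂ) * Complex.I))) θ :=
      ContinuousAt.comp (g := Jf)
        (f := fun θ : ℝ => ζ * Complex.exp ((θ : ℂ) * Complex.I)) (x := θ)
        (hJcont hw0) (hEcont ζ).continuousAt
    exact ContinuousAt.comp (g := f)
      (f := fun θ : ℝ => Jf (ζ * Complex.exp ((θ : ℂ) * Complex.I))) (x := θ)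
      (hAn _ h1' h2').continuousAt hinner
  -- bounds for ρ viewed in ℂ
  have habsρ : ‖(ρ : ℂ)‖ = ρ := by
    rw [Complex.norm_real, Real.norm_eq_abs, abs_of_pos hρ0]
  have hρ1' : r'⁻¹ < ‖(ρ : ℂ)‖ := by
    rw [habsρ]; exact lt_of_lt_of_le (inv_lt_one_of_one_lt₀ hr'1) hρ
  have hρ2' : ‖(ρ : ℂ)‖ < r' := by
    rw [habsρ]; exact lt_trans hlt hrr'
  -- the unimodular weight
  set u : ℝ → ℂ := fun θ => csgn (f (joukowski ρ θ)) with hu_def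
  have hu_meas : Measurable u := by
    have hc : Continuous fun θ : ℝ => f (Jf ((ρ : ℂ) * Complex.exp ((θ : ℂ) * Complex.I))) :=
      hcontθ (ρ : ℂ) hρ1' hρ2'
    exact measurable_csgn.comp hc.measurable
  have hu_bd : ∀ θ : ℝ, ‖u θ‖ ≤ 1 := fun θ => norm_csgn_le _
  -- the analytic functional
  set Φ : ℂ → ℂ := fun ζ =>
    ∫ θ in (0:ℝ)..(2 * π), f (Jf (ζ * Complex.exp ((θ : ℂ) * Complex.I))) * u θ with hΦ_def
  have h2π : (0:ℝ) ≤ 2 * π := by positivity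
  -- integrability
  have hInt : ∀ ζ : ℂ, r'⁻¹ < ‖ζ‖ → ‖ζ‖ < r' →
      IntervalIntegrable
        (fun θ : ℝ => f (Jf (ζ * Complex.exp ((θ : ℂ) * Complex.I))) * u θ)
        volume 0 (2 * π) := by
    intro ζ h1 h2
    have hc := hcontθ ζ h1 h2
    rw [intervalIntegrable_iff]
    refine MeasureTheory.Integrable.mono'
      (intervalIntegrable_iff.1 ((hc.norm).intervalIntegrable 0 (2 * π)))
      ((hc.aestronglyMeasurable.mul hu_meas.aestronglyMeasurable).restrict) ?_
    refine Filter.Eventually.of_forall (fun θ => ?_)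
    rw [norm_mul]
    calc ‖f (Jf (ζ * Complex.exp ((θ : ℂ) * Complex.I)))‖ * ‖u θ‖
        ≤ ‖f (Jf (ζ * Complex.exp ((θ : ℂ) * Complex.I)))‖ * 1 :=
          mul_le_mul_of_nonneg_left (hu_bd θ) (norm_nonneg _)
      _ = ‖f (Jf (ζ * Complex.exp ((θ : ℂ) * Complex.I)))‖ := mul_one _
  -- periodicity of the boundary integrand
  have hexp_per : ∀ θ : ℝ,
      Complex.exp (((θ + 2 * π : ℝ) : ℂ) * Complex.I) =
        Complex.exp ((θ : ℂ) * Complex.I) := by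
    intro θ
    push_cast
    rw [add_mul, Complex.exp_add, Complex.exp_two_pi_mul_I, mul_one]
  set G : ℝ → ℝ := fun θ => ‖f (joukowski r θ)‖ with hG_def
  have hGper : Function.Periodic G (2 * π) := by
    intro θ
    have hj : joukowski r (θ + 2 * π) = joukowski r θ := by
      rw [jouk, jouk, hexp_per]
    simp only [hG_def, hj]
  -- boundary bound on the circle of radius r
  have hbound_r : ∀ ζ : ℂ, ‖ζ‖ = r →
      (∫ θ in (0:ℝ)..(2 * π), ‖f (Jf (ζ * Complex.exp ((θ : ℂ) * Complex.I)))‖) =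
        ∫ θ in (0:ℝ)..(2 * π), G θ := by
    intro ζ hζ
    have hkey : ∀ θ : ℝ, ζ * Complex.exp ((θ : ℂ) * Complex.I) =
        (r : ℂ) * Complex.exp (((θ + Complex.arg ζ : ℝ) : ℂ) * Complex.I) := by
      intro θ
      conv_lhs => rw [← Complex.norm_mul_exp_arg_mul_I ζ]
      rw [hζ]
      push_cast
      rw [add_mul, Complex.exp_add]
      ring
    have hstep : (fun θ : ℝ => ‖f (Jf (ζ * Complex.exp ((θ : ℂ) * Complex.I)))‖) =
        fun θ : ℝ => G (θ + Complex.arg ζ) := by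
      funext θ
      simp only [hG_def]
      rw [hkey θ, jouk]
    rw [hstep]
    rw [intervalIntegral.integral_comp_add_right (fun x => G x) (Complex.arg ζ)]
    have := hGper.intervalIntegral_add_eq (0 + Complex.arg ζ) 0
    rw [zero_add] at this
    calc (∫ x in (0 + Complex.arg ζ)..(2 * π + Complex.arg ζ), G x)
        = ∫ x in (Complex.arg ζ)..(Complex.arg ζ + 2 * π), G x := by
          rw [zero_add, add_comm (2 * π)]
      _ = ∫ x in (0:ℝ)..(0 + 2 * π), G x := this
      _ = ∫ x in (0:ℝ)..(2 * π), G x := by rw [zero_add]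
  -- boundary bound on the circle of radius r⁻¹
  have hbound_inv : ∀ ζ : ℂ, ‖ζ‖ = r⁻¹ →
      (∫ θ in (0:ℝ)..(2 * π), ‖f (Jf (ζ * Complex.exp ((θ : ℂ) * Complex.I)))‖) =
        ∫ θ in (0:ℝ)..(2 * π), G θ := by
    intro ζ hζ
    have hkey : ∀ θ : ℝ, Jf (ζ * Complex.exp ((θ : ℂ) * Complex.I)) =
        Jf ((r : ℂ) * Complex.exp (((-(θ + Complex.arg ζ) : ℝ) : ℂ) * Complex.I)) := by
      intro θ
      have h1 : ζ * Complex.exp ((θ : ℂ) * Complex.I) =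
          ((r⁻¹ : ℝ) : ℂ) * Complex.exp (((θ + Complex.arg ζ : ℝ) : ℂ) * Complex.I) := by
        conv_lhs => rw [← Complex.norm_mul_exp_arg_mul_I ζ]
        rw [hζ]
        push_cast
        rw [add_mul, Complex.exp_add]
        ring
      have h2 : (((r⁻¹ : ℝ) : ℂ) *
            Complex.exp (((θ + Complex.arg ζ : ℝ) : ℂ) * Complex.I))⁻¹ =
          (r : ℂ) * Complex.exp (((-(θ + Complex.arg ζ) : ℝ) : ℂ) * Complex.I) := by
        rw [mul_inv, ← Complex.exp_neg]
        push_cast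
        rw [inv_inv]
        ring_nf
      rw [h1, ← h2, Jf_inv]
    have hstep : (fun θ : ℝ => ‖f (Jf (ζ * Complex.exp ((θ : ℂ) * Complex.I)))‖) =
        fun θ : ℝ => G (-(θ + Complex.arg ζ)) := by
      funext θ
      simp only [hG_def]
      rw [hkey θ, jouk]
    rw [hstep]
    have e1 : (∫ θ in (0:ℝ)..(2 * π), G (-(θ + Complex.arg ζ))) =
        ∫ x in (0 + Complex.arg ζ)..(2 * π + Complex.arg ζ), G (-x) :=
      intervalIntegral.integral_comp_add_right (fun x => G (-x)) (Complex.arg ζ)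
    rw [e1, intervalIntegral.integral_comp_neg (fun x => G x)]
    have := hGper.intervalIntegral_add_eq (-(2 * π + Complex.arg ζ)) 0
    calc (∫ x in (-(2 * π + Complex.arg ζ))..(-(0 + Complex.arg ζ)), G x)
        = ∫ x in (-(2 * π + Complex.arg ζ))..(-(2 * π + Complex.arg ζ) + 2 * π), G x := by
          congr 1; ring
      _ = ∫ x in (0:ℝ)..(0 + 2 * π), G x := this
      _ = ∫ x in (0:ℝ)..(2 * π), G x := by rw [zero_add]
  -- differentiability of Φ on the annulus of analyticity
  have hΦdiff : ∀ ζ₀ : ℂ, r'⁻¹ < ‖ζ₀‖ → ‖ζ₀‖ < r' →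
      DifferentiableAt ℂ Φ ζ₀ := by
    intro ζ₀ h1 h2
    set t₀ := ‖ζ₀‖ with ht₀
    set a := (r'⁻¹ + t₀) / 2 with ha_def
    set b := (t₀ + r') / 2 with hb_def
    have ha1 : r'⁻¹ < a := by rw [ha_def]; linarith
    have ha2 : a < t₀ := by rw [ha_def]; linarith
    have hb1 : t₀ < b := by rw [hb_def]; linarith
    have hb2 : b < r' := by rw [hb_def]; linarith
    have ha0 : 0 < a := lt_trans (inv_pos.2 hr'0) ha1
    set ε := min (t₀ - a) (b - t₀) with hε_def
    have hε : 0 < ε := lt_min (by linarith) (by linarith)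
    have hball : ∀ ζ ∈ Metric.ball ζ₀ ε, a < ‖ζ‖ ∧ ‖ζ‖ < b := by
      intro ζ hζ
      rw [Metric.mem_ball, Complex.dist_eq] at hζ
      have hsub := abs_norm_sub_norm_le ζ ζ₀
      rw [abs_le, ← ht₀] at hsub
      constructor
      · have h3 : ε ≤ t₀ - a := min_le_left _ _
        linarith [hsub.1]
      · have h3 : ε ≤ b - t₀ := min_le_right _ _
        linarith [hsub.2]
    -- compact set on which we bound deriv f
    set S : Set ℂ := Metric.closedBall 0 b \ Metric.ball 0 a with hS_def
    have hS_abs : ∀ w ∈ S, a ≤ ‖w‖ ∧ ‖w‖ ≤ b := by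
      intro w hw
      rw [hS_def, Set.mem_diff, Metric.mem_closedBall, Metric.mem_ball,
        Complex.dist_eq, sub_zero, not_lt] at hw
      exact ⟨hw.2, hw.1⟩
    have hS_mem : ∀ w ∈ S, r'⁻¹ < ‖w‖ ∧ ‖w‖ < r' := by
      intro w hw
      obtain ⟨hwa, hwb⟩ := hS_abs w hw
      exact ⟨lt_of_lt_of_le ha1 hwa, lt_of_le_of_lt hwb hb2⟩
    have hS_ne : ∀ w ∈ S, w ≠ 0 := by
      intro w hw h0
      obtain ⟨hwa, _⟩ := hS_abs w hw
      rw [h0] at hwa; simp at hwa; linarith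
    have hScpt : IsCompact S := (isCompact_closedBall 0 b).diff Metric.isOpen_ball
    have hJS : ContinuousOn Jf S := fun w hw => (hJcont (hS_ne w hw)).continuousWithinAt
    have hKcpt : IsCompact (Jf '' S) := hScpt.image_of_continuousOn hJS
    have hKcont : ∀ z ∈ Jf '' S, ContinuousAt (deriv f) z := by
      rintro z ⟨w, hw, rfl⟩
      obtain ⟨hw1, hw2⟩ := hS_mem w hw
      have hA : AnalyticAt ℂ f (Jf w) := hAn w hw1 hw2
      have hOn : AnalyticOnNhd ℂ f {Jf w} := by
        intro y hy
        rw [Set.mem_singleton_iff] at hy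
        rw [hy]; exact hA
      exact (hOn.deriv (Jf w) rfl).continuousAt
    obtain ⟨C, hC⟩ := hKcpt.exists_bound_of_continuousOn
      (fun z hz => (hKcont z hz).continuousWithinAt)
    set C' := max C 0 with hC'_def
    have hC'0 : 0 ≤ C' := le_max_right _ _
    have hC' : ∀ z ∈ Jf '' S, ‖deriv f z‖ ≤ C' := fun z hz =>
      (hC z hz).trans (le_max_left _ _)
    -- the pointwise derivative
    set F' : ℂ → ℝ → ℂ := fun ζ θ =>
      deriv f (Jf (ζ * Complex.exp ((θ : ℂ) * Complex.I))) *
        ((1 + -(((ζ * Complex.exp ((θ : ℂ) * Complex.I)) ^ 2)⁻¹)) / 2 *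
          Complex.exp ((θ : ℂ) * Complex.I)) * u θ with hF'_def
    have hballS : ∀ ζ ∈ Metric.ball ζ₀ ε, ∀ θ : ℝ,
        ζ * Complex.exp ((θ : ℂ) * Complex.I) ∈ S := by
      intro ζ hζ θ
      obtain ⟨h3, h4⟩ := hball ζ hζ
      rw [hS_def, Set.mem_diff, Metric.mem_closedBall, Metric.mem_ball,
        Complex.dist_eq, sub_zero, not_lt, habs]
      exact ⟨h4.le, h3.le⟩
    have hderiv : ∀ ζ ∈ Metric.ball ζ₀ ε, ∀ θ : ℝ,
        HasDerivAt (fun ζ' : ℂ =>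
            f (Jf (ζ' * Complex.exp ((θ : ℂ) * Complex.I))) * u θ) (F' ζ θ) ζ := by
      intro ζ hζ θ
      have hwS := hballS ζ hζ θ
      have hw0 : ζ * Complex.exp ((θ : ℂ) * Complex.I) ≠ 0 := hS_ne _ hwS
      obtain ⟨hw1, hw2⟩ := hS_mem _ hwS
      have h₁ : HasDerivAt (fun ζ' : ℂ => ζ' * Complex.exp ((θ : ℂ) * Complex.I))
          (Complex.exp ((θ : ℂ) * Complex.I)) ζ :=
        hasDerivAt_mul_const _
      have h₂ : HasDerivAt Jf
          ((1 + -(((ζ * Complex.exp ((θ : ℂ) * Complex.I)) ^ 2)⁻¹)) / 2)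
          (ζ * Complex.exp ((θ : ℂ) * Complex.I)) :=
        ((hasDerivAt_id _).add (hasDerivAt_inv hw0)).div_const 2
      have h₃ : HasDerivAt f
          (deriv f (Jf (ζ * Complex.exp ((θ : ℂ) * Complex.I))))
          (Jf (ζ * Complex.exp ((θ : ℂ) * Complex.I))) :=
        (hAn _ hw1 hw2).differentiableAt.hasDerivAt
      exact (h₃.comp ζ (h₂.comp ζ h₁)).mul_const (u θ)
    have hbd : ∀ ζ ∈ Metric.ball ζ₀ ε, ∀ θ : ℝ,
        ‖F' ζ θ‖ ≤ C' * ((1 + (a ^ 2)⁻¹) / 2) := by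
      intro ζ hζ θ
      have hwS := hballS ζ hζ θ
      obtain ⟨hwa, hwb⟩ := hS_abs _ hwS
      rw [hF'_def]
      simp only []
      rw [norm_mul, norm_mul]
      have e1 : ‖deriv f (Jf (ζ * Complex.exp ((θ : ℂ) * Complex.I)))‖ ≤ C' :=
        hC' _ ⟨_, hwS, rfl⟩
      have e2 : ‖(1 + -(((ζ * Complex.exp ((θ : ℂ) * Complex.I)) ^ 2)⁻¹)) / 2 *
          Complex.exp ((θ : ℂ) * Complex.I)‖ ≤ (1 + (a ^ 2)⁻¹) / 2 := by
        rw [norm_mul,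
          Complex.norm_exp_ofReal_mul_I, mul_one, norm_div]
        have : ‖(1 : ℂ) + -(((ζ * Complex.exp ((θ : ℂ) * Complex.I)) ^ 2)⁻¹)‖ ≤
            1 + (a ^ 2)⁻¹ := by
          refine (norm_add_le _ _).trans ?_
          rw [norm_neg, norm_one]
          have : ‖(((ζ * Complex.exp ((θ : ℂ) * Complex.I)) ^ 2)⁻¹ : ℂ)‖ ≤ (a ^ 2)⁻¹ := by
            rw [norm_inv, norm_pow]
            refine inv_anti₀ (by positivity) ?_
            exact pow_le_pow_left₀ ha0.le hwa 2
          linarith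
        calc ‖(1 : ℂ) + -(((ζ * Complex.exp ((θ : ℂ) * Complex.I)) ^ 2)⁻¹)‖ / ‖(2:ℂ)‖
            = ‖(1 : ℂ) + -(((ζ * Complex.exp ((θ : ℂ) * Complex.I)) ^ 2)⁻¹)‖ / 2 := by
              norm_num
          _ ≤ (1 + (a ^ 2)⁻¹) / 2 := by linarith
      calc ‖deriv f (Jf (ζ * Complex.exp ((θ : ℂ) * Complex.I)))‖ *
            ‖(1 + -(((ζ * Complex.exp ((θ : ℂ) * Complex.I)) ^ 2)⁻¹)) / 2 *
              Complex.exp ((θ : ℂ) * Complex.I)‖ * ‖u θ‖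
          ≤ C' * ((1 + (a ^ 2)⁻¹) / 2) * 1 := by
            refine mul_le_mul ?_ (hu_bd θ) (norm_nonneg _) (by positivity)
            exact mul_le_mul e1 e2 (norm_nonneg _) hC'0
        _ = C' * ((1 + (a ^ 2)⁻¹) / 2) := mul_one _
    -- measurability of F' ζ₀
    have hF'meas : AEStronglyMeasurable (F' ζ₀) (volume.restrict (Set.uIoc 0 (2 * π))) := by
      have hcont1 : Continuous fun θ : ℝ =>
          deriv f (Jf (ζ₀ * Complex.exp ((θ : ℂ) * Complex.I))) := by
        rw [continuous_iff_continuousAt]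
        intro θ
        have hwS := hballS ζ₀ (Metric.mem_ball_self hε) θ
        have hinner : ContinuousAt
            (fun θ : ℝ => Jf (ζ₀ * Complex.exp ((θ : ℂ) * Complex.I))) θ :=
          ContinuousAt.comp (g := Jf)
            (f := fun θ : ℝ => ζ₀ * Complex.exp ((θ : ℂ) * Complex.I)) (x := θ)
            (hJcont (hS_ne _ hwS)) (hEcont ζ₀).continuousAt
        exact ContinuousAt.comp (g := deriv f)
          (f := fun θ : ℝ => Jf (ζ₀ * Complex.exp ((θ : ℂ) * Complex.I))) (x := θ)
          (hKcont _ ⟨_, hwS, rfl⟩) hinner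
      have hcont2 : Continuous fun θ : ℝ =>
          (1 + -(((ζ₀ * Complex.exp ((θ : ℂ) * Complex.I)) ^ 2)⁻¹)) / 2 *
            Complex.exp ((θ : ℂ) * Complex.I) := by
        rw [continuous_iff_continuousAt]
        intro θ
        have hw0 : ζ₀ * Complex.exp ((θ : ℂ) * Complex.I) ≠ 0 :=
          hS_ne _ (hballS ζ₀ (Metric.mem_ball_self hε) θ)
        have hsq : (ζ₀ * Complex.exp ((θ : ℂ) * Complex.I)) ^ 2 ≠ 0 := pow_ne_zero 2 hw0
        refine ContinuousAt.mul (ContinuousAt.div_const (ContinuousAt.add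
          continuousAt_const (ContinuousAt.neg (ContinuousAt.inv₀ (ContinuousAt.pow
          (hEcont ζ₀).continuousAt 2) hsq))) 2) ?_
        exact (Complex.continuous_exp.comp
          (Complex.continuous_ofReal.mul continuous_const)).continuousAt
      exact (((hcont1.mul hcont2).aestronglyMeasurable).mul
        hu_meas.aestronglyMeasurable).restrict
    -- apply dominated differentiation under the integral
    have hmain := intervalIntegral.hasDerivAt_integral_of_dominated_loc_of_deriv_le
      (F := fun ζ θ => f (Jf (ζ * Complex.exp ((θ : ℂ) * Complex.I))) * u θ)
      (F' := F') (x₀ := ζ₀)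
      (bound := fun _ : ℝ => C' * ((1 + (a ^ 2)⁻¹) / 2))
      (Metric.ball_mem_nhds ζ₀ hε) ?_ (hInt ζ₀ h1 h2) hF'meas ?_ (intervalIntegrable_const) ?_
    · exact hmain.2.differentiableAt
    · filter_upwards [Metric.ball_mem_nhds ζ₀ hε] with ζ hζ
      obtain ⟨h3, h4⟩ := hball ζ hζ
      have h5 : r'⁻¹ < ‖ζ‖ := lt_trans ha1 h3
      have h6 : ‖ζ‖ < r' := lt_trans h4 hb2
      exact (((hcontθ ζ h5 h6).aestronglyMeasurable).mul
        hu_meas.aestronglyMeasurable).restrict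
    · exact Filter.Eventually.of_forall (fun θ _ ζ hζ => hbd ζ hζ θ)
    · exact Filter.Eventually.of_forall (fun θ _ ζ hζ => hderiv ζ hζ θ)
  -- the annulus for the maximum principle
  set U₀ : Set ℂ := {z : ℂ | r⁻¹ < ‖z‖ ∧ ‖z‖ < r} with hU₀_def
  have hU₀open : IsOpen U₀ := by
    have : U₀ = (fun z : ℂ => ‖z‖) ⁻¹' (Set.Ioo r⁻¹ r) := rfl
    rw [this]
    exact isOpen_Ioo.preimage continuous_norm
  have hU₀bdd : Bornology.IsBounded U₀ := by
    refine (Metric.isBounded_closedBall (x := (0:ℂ)) (r := r)).subset ?_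
    intro z hz
    rw [Metric.mem_closedBall, Complex.dist_eq, sub_zero]
    exact hz.2.le
  have hAcl : closure U₀ ⊆ {z : ℂ | r⁻¹ ≤ ‖z‖ ∧ ‖z‖ ≤ r} := by
    refine closure_minimal ?_ ?_
    · intro z hz; exact ⟨hz.1.le, hz.2.le⟩
    · have : {z : ℂ | r⁻¹ ≤ ‖z‖ ∧ ‖z‖ ≤ r} =
          (fun z : ℂ => ‖z‖) ⁻¹' (Set.Icc r⁻¹ r) := rfl
      rw [this]
      exact isClosed_Icc.preimage continuous_norm
  have hr'r : r'⁻¹ < r⁻¹ := by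
    rw [inv_lt_inv₀ hr'0 hr0]
    exact hrr'
  have hΦcl : DiffContOnCl ℂ Φ U₀ := by
    refine DifferentiableOn.diffContOnCl ?_
    intro z hz
    obtain ⟨hz1, hz2⟩ := hAcl hz
    exact (hΦdiff z (lt_of_lt_of_le hr'r hz1)
      (lt_of_le_of_lt hz2 hrr')).differentiableWithinAt
  -- the boundary bound
  have hfront : ∀ z ∈ frontier U₀, ‖Φ z‖ ≤ ∫ θ in (0:ℝ)..(2 * π), G θ := by
    intro z hz
    have hzcl : z ∈ closure U₀ := frontier_subset_closure hz
    have hznot : z ∉ U₀ := by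
      intro h
      exact (disjoint_frontier_iff_isOpen.2 hU₀open).le_bot ⟨hz, h⟩
    obtain ⟨hz1, hz2⟩ := hAcl hzcl
    have hcase : ‖z‖ = r⁻¹ ∨ ‖z‖ = r := by
      rw [hU₀_def, Set.mem_setOf_eq, not_and_or, not_lt, not_lt] at hznot
      rcases hznot with h | h
      · left; linarith
      · right; linarith
    have hz1' : r'⁻¹ < ‖z‖ := lt_of_lt_of_le hr'r hz1
    have hz2' : ‖z‖ < r' := lt_of_le_of_lt hz2 hrr'
    have hnorm : ‖Φ z‖ ≤
        ∫ θ in (0:ℝ)..(2 * π), ‖f (Jf (z * Complex.exp ((θ : ℂ) * Complex.I))) * u θ‖ := by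
      rw [hΦ_def]
      exact intervalIntegral.norm_integral_le_integral_norm h2π
    have hmono : (∫ θ in (0:ℝ)..(2 * π),
          ‖f (Jf (z * Complex.exp ((θ : ℂ) * Complex.I))) * u θ‖) ≤
        ∫ θ in (0:ℝ)..(2 * π), ‖f (Jf (z * Complex.exp ((θ : ℂ) * Complex.I)))‖ := by
      refine intervalIntegral.integral_mono_on h2π ((hInt z hz1' hz2').norm)
        ((hcontθ z hz1' hz2').norm.intervalIntegrable _ _) (fun θ _ => ?_)
      rw [norm_mul]
      calc ‖f (Jf (z * Complex.exp ((θ : ℂ) * Complex.I)))‖ * ‖u θ‖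
          ≤ ‖f (Jf (z * Complex.exp ((θ : ℂ) * Complex.I)))‖ * 1 :=
            mul_le_mul_of_nonneg_left (hu_bd θ) (norm_nonneg _)
        _ = _ := mul_one _
    rcases hcase with h | h
    · exact le_of_le_of_eq (hnorm.trans hmono) (hbound_inv z h)
    · exact le_of_le_of_eq (hnorm.trans hmono) (hbound_r z h)
  -- ρ is in the closure of the annulus
  have hρU₀ : (ρ : ℂ) ∈ closure U₀ := by
    refine subset_closure ?_
    rw [hU₀_def, Set.mem_setOf_eq, habsρ]
    exact ⟨lt_of_lt_of_le (inv_lt_one_of_one_lt₀ hr1) hρ, hlt⟩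
  -- maximum modulus principle
  have hmax : ‖Φ (ρ : ℂ)‖ ≤ ∫ θ in (0:ℝ)..(2 * π), G θ :=
    Complex.norm_le_of_forall_mem_frontier_norm_le hU₀bdd hΦcl hfront hρU₀
  -- compute Φ ρ
  have hΦρ : Φ (ρ : ℂ) =
      ((∫ θ in (0:ℝ)..(2 * π), ‖f (joukowski ρ θ)‖) : ℝ) := by
    have heq : (fun θ : ℝ => f (Jf ((ρ : ℂ) * Complex.exp ((θ : ℂ) * Complex.I))) * u θ) =
        fun θ : ℝ => ((‖f (joukowski ρ θ)‖ : ℝ) : ℂ) := by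
      funext θ
      rw [hu_def]
      exact mul_csgn _
    show (∫ θ in (0:ℝ)..(2 * π),
        f (Jf ((ρ : ℂ) * Complex.exp ((θ : ℂ) * Complex.I))) * u θ) = _
    rw [heq]
    exact intervalIntegral.integral_ofReal
  have hInonneg : 0 ≤ ∫ θ in (0:ℝ)..(2 * π), ‖f (joukowski ρ θ)‖ :=
    intervalIntegral.integral_nonneg h2π (fun θ _ => norm_nonneg _)
  have hnormΦρ : ‖Φ (ρ : ℂ)‖ = ∫ θ in (0:ℝ)..(2 * π), ‖f (joukowski ρ θ)‖ := by
    rw [hΦρ, Complex.norm_real, Real.norm_eq_abs, _root_.abs_of_nonneg hInonneg]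
  -- conclude
  have hC₀eq : (∫ θ in (0:ℝ)..(2 * π), G θ) =
      ∫ θ in (0:ℝ)..(2 * π), ‖f (joukowski r θ)‖ := by
    simp only [hG_def]
  have hfinal : (∫ θ in (0:ℝ)..(2 * π), ‖f (joukowski ρ θ)‖) ≤
      ∫ θ in (0:ℝ)..(2 * π), ‖f (joukowski r θ)‖ := by
    rw [← hnormΦρ, ← hC₀eq]
    exact hmax
  unfold Mfun
  have hπ : 0 ≤ 1 / π := by positivity
  exact mul_le_mul_of_nonneg_left hfinal hπ
end
end
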